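/- arXiv:1409.6413 — 7 statements merged into one kernel-verified Lean document; each statement's English description precedes it below -/
import Mathlib

section
/- Let M be a symmetric, homogeneous (of degree one), differentiable bivariate mean on (0,∞)², and let θ, θ* be fixed real numbers with θ + θ* = 1. Then lim_{x→∞} (x + 1/2)·ln( M(x+θ, x+θ*) / (x+1/2) ) = 0. -/
open Filter Real Set

set_option maxHeartbeats 1000000 in
theorem D1_limit (M : ℝ → ℝ → ℝ)
    (hmean : ∀ a > (0:ℝ), ∀ b > (0:ℝ), min a b ≤ M a b ∧ M a b ≤ max a b)
    (hsymm : ∀ a > (0:ℝ), ∀ b > (0:ℝ), M a b = M b a)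
    (hhom : ∀ t > (0:ℝ), ∀ a > (0:ℝ), ∀ b > (0:ℝ), M (t * a) (t * b) = t * M a b)
    (hdiff : ∀ a > (0:ℝ), ∀ b > (0:ℝ), DifferentiableAt ℝ (fun p : ℝ × ℝ => M p.1 p.2) (a, b))
    (θ θs : ℝ) (hθ : θ + θs = 1) :
    Tendsto (fun x : ℝ => (x + 1 / 2) * Real.log (M (x + θ) (x + θs) / (x + 1 / 2)))
      atTop (nhds 0) := by
  set d : ℝ := (θ - θs) / 2 with hd
  have hθ1 : θ = 1/2 + d := by rw [hd]; linarith
  have hθ2 : θs = 1/2 - d := by rw [hd]; linarith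
  set f : ℝ → ℝ := fun u => M (1 + u) (1 - u) with hfdef
  have hf0 : f 0 = 1 := by
    have h := hmean 1 one_pos 1 one_pos
    simp only [min_self, max_self] at h
    have : M 1 1 = 1 := le_antisymm h.2 h.1
    simp [hfdef, this]
  -- f is differentiable at 0 with some derivative v
  have hF := (hdiff 1 one_pos 1 one_pos).hasFDerivAt
  set L := fderiv ℝ (fun p : ℝ × ℝ => M p.1 p.2) (1, 1) with hL
  have hγ : HasDerivAt (fun u : ℝ => ((1 + u, 1 - u) : ℝ × ℝ)) ((1 : ℝ), (-1 : ℝ)) 0 := by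
    have h := ((hasDerivAt_const (0:ℝ) (1:ℝ)).add (hasDerivAt_id 0)).prodMk
      (((hasDerivAt_const (0:ℝ) (1:ℝ)).sub (hasDerivAt_id 0)))
    norm_num at h
    exact h
  have hfv : HasDerivAt f (L (1, -1)) 0 := by
    have := HasFDerivAt.comp_hasDerivAt 0 (by simpa using hF) hγ
    exact this
  set v : ℝ := L (1, -1) with hv
  -- evenness near 0
  have heven : f =ᶠ[nhds (0:ℝ)] fun u => f (-u) := by
    filter_upwards [Ioo_mem_nhds (by norm_num : (-1:ℝ) < 0) (by norm_num : (0:ℝ) < 1)] with u hu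
    have h1 : (0:ℝ) < 1 + u := by linarith [hu.1]
    have h2 : (0:ℝ) < 1 - u := by linarith [hu.2]
    have := hsymm (1 + u) h1 (1 - u) h2
    simp only [hfdef]
    rw [this]
    ring_nf
  -- derivative of u ↦ f (-u) at 0 is -v
  have hneg : HasDerivAt (fun u : ℝ => f (-u)) (-v) 0 := by
    have h0 : HasDerivAt f v (-(0:ℝ)) := by simpa using hfv
    have := HasDerivAt.comp 0 h0 (hasDerivAt_neg 0)
    rw [mul_neg_one] at this
    exact this
  have hv2 : HasDerivAt f (-v) 0 := hneg.congr_of_eventuallyEq heven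
  have hveq : v = 0 := by
    have := hfv.unique hv2
    linarith
  have hfv0 : HasDerivAt f 0 0 := hveq ▸ hfv
  -- g = log ∘ f has derivative 0 at 0
  have hg : HasDerivAt (fun u => Real.log (f u)) 0 0 := by
    have := hfv0.log (by rw [hf0]; exact one_ne_zero)
    simpa using this
  set g : ℝ → ℝ := fun u => Real.log (f u) with hgdef
  have hg0 : g 0 = 0 := by simp [hgdef, hf0]
  rw [hasDerivAt_iff_tendsto_slope] at hg
  by_cases hd0 : d = 0
  · -- θ = θs = 1/2, expression is eventually 0
    apply Tendsto.congr' _ tendsto_const_nhds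
    filter_upwards [eventually_gt_atTop (0:ℝ)] with x hx
    have hc : (0:ℝ) < x + 1/2 := by linarith
    have hθ1' : θ = 1/2 := by rw [hθ1, hd0]; ring
    have hθ2' : θs = 1/2 := by rw [hθ2, hd0]; ring
    have hm := hmean (x + 1/2) hc (x + 1/2) hc
    simp only [min_self, max_self] at hm
    have hMx : M (x + 1/2) (x + 1/2) = x + 1/2 := le_antisymm hm.2 hm.1
    rw [hθ1', hθ2', hMx, div_self (ne_of_gt hc), Real.log_one, mul_zero]
  · -- main case
    have hφ0 : Tendsto (fun x : ℝ => d / (x + 1/2)) atTop (nhds 0) :=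
      (tendsto_atTop_add_const_right _ _ tendsto_id).const_div_atTop d
    have hφ : Tendsto (fun x : ℝ => d / (x + 1/2)) atTop (nhdsWithin 0 {(0:ℝ)}ᶜ) := by
      apply tendsto_nhdsWithin_of_tendsto_nhds_of_eventually_within _ hφ0
      filter_upwards [eventually_gt_atTop (0:ℝ)] with x hx
      exact div_ne_zero hd0 (by positivity)
    have hcomp : Tendsto (fun x : ℝ => slope g 0 (d / (x + 1/2))) atTop (nhds 0) := hg.comp hφ
    have hmul : Tendsto (fun x : ℝ => d * slope g 0 (d / (x + 1/2))) atTop (nhds 0) := by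
      have h := hcomp.const_mul d
      rwa [mul_zero] at h
    apply Tendsto.congr' _ hmul
    filter_upwards [eventually_gt_atTop (|d|)] with x hx
    have hc : (0:ℝ) < x + 1/2 := by
      have := abs_nonneg d; linarith
    set c : ℝ := x + 1/2 with hcdef
    set u : ℝ := d / c with hudef
    have hcu : c * u = d := by
      rw [hudef]; field_simp
    have hau : |u| < 1 := by
      rw [hudef, abs_div, abs_of_pos hc, div_lt_one hc]
      calc |d| < x := hx
        _ ≤ x + 1/2 := by linarith
    have h1u : (0:ℝ) < 1 + u := by
      have := abs_lt.mp hau; linarith [this.1]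
    have h2u : (0:ℝ) < 1 - u := by
      have := abs_lt.mp hau; linarith [this.2]
    have hhom' := hhom c hc (1 + u) h1u (1 - u) h2u
    have he1 : c * (1 + u) = x + θ := by
      rw [mul_add, mul_one, hcu, hθ1, hcdef]; ring
    have he2 : c * (1 - u) = x + θs := by
      rw [mul_sub, mul_one, hcu, hθ2, hcdef]; ring
    rw [he1, he2] at hhom'
    have hMdiv : M (x + θ) (x + θs) / c = f u := by
      rw [hhom', mul_div_cancel_left₀ _ (ne_of_gt hc)]
    have hslope : slope g 0 u = g u / u := by
      rw [slope_def_field, hg0]; ring_nf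
    have hune : u ≠ 0 := div_ne_zero hd0 (ne_of_gt hc)
    show d * slope g 0 u = c * Real.log (M (x + θ) (x + θs) / c)
    symm
    rw [hMdiv, hslope, ← hcu]
    have : g u = Real.log (f u) := rfl
    rw [← this]
    field_simp
end

section
/- Let N be a symmetric, homogeneous (of degree one), differentiable bivariate mean on ℝ², and let σ, σ* be fixed real numbers with σ + σ* = 1. Then lim_{x→∞} ( N(x+σ, x+σ*) − (x + 1/2) ) = 0. -/
open Filter Real Set Topology

theorem D2_limit (N : ℝ → ℝ → ℝ)
    (hmean : ∀ a b : ℝ, min a b ≤ N a b ∧ N a b ≤ max a b)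
    (hsymm : ∀ a b : ℝ, N a b = N b a)
    (hhom : ∀ t > (0:ℝ), ∀ a b : ℝ, N (t * a) (t * b) = t * N a b)
    (hdiff : Differentiable ℝ (fun p : ℝ × ℝ => N p.1 p.2))
    (σ σs : ℝ) (hσ : σ + σs = 1) :
    Tendsto (fun x : ℝ => N (x + σ) (x + σs) - (x + 1 / 2)) atTop (nhds 0) := by
  set F : ℝ × ℝ → ℝ := fun p => N p.1 p.2 with hF
  have hNtt : ∀ t : ℝ, N t t = t := by
    intro t
    have h := hmean t t
    simp only [min_self, max_self] at h
    linarith [h.1, h.2]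
  set L := fderiv ℝ F (1, 1) with hL
  have hFd : HasFDerivAt F L (1, 1) := (hdiff (1, 1)).hasFDerivAt
  -- symmetry gives L (1,0) = L (0,1)
  have hswapEq : L (1, 0) = L (0, 1) := by
    set e : (ℝ × ℝ) ≃L[ℝ] (ℝ × ℝ) := ContinuousLinearEquiv.prodComm ℝ ℝ ℝ with he
    have hcomp : HasFDerivAt (F ∘ e) (L.comp (e : (ℝ × ℝ) →L[ℝ] (ℝ × ℝ))) (1, 1) := by
      have : (e : (ℝ × ℝ) → (ℝ × ℝ)) (1, 1) = (1, 1) := rfl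
      exact hFd.comp (1, 1) (e.hasFDerivAt)
    have hfe : (F ∘ e) = F := by
      funext p
      simp only [Function.comp, hF]
      exact (hsymm p.2 p.1)
    rw [hfe] at hcomp
    have huniq := hFd.unique hcomp
    have := congrArg (fun (T : (ℝ × ℝ) →L[ℝ] ℝ) => T (0, 1)) huniq
    exact this.symm
  -- diagonal gives L (1,1) = 1
  have hdiag : L (1, 1) = 1 := by
    set d : ℝ →L[ℝ] (ℝ × ℝ) := (ContinuousLinearMap.id ℝ ℝ).prod (ContinuousLinearMap.id ℝ ℝ) with hd
    have hdd : HasFDerivAt (fun t : ℝ => (t, t)) d 1 := d.hasFDerivAt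
    have hcomp : HasDerivAt (fun t : ℝ => F (t, t)) (L (1, 1)) 1 := by
      have hcc := HasFDerivAt.comp (f := fun t : ℝ => (t, t)) 1 hFd hdd
      simpa [hd, Function.comp_def] using hcc.hasDerivAt
    have hid : (fun t : ℝ => F (t, t)) = fun t => t := by
      funext t; exact hNtt t
    rw [hid] at hcomp
    have := (hasDerivAt_id (1 : ℝ)).unique hcomp
    exact this.symm
  have hLval : L (σ, σs) = 1 / 2 := by
    have hdecomp : ((σ, σs) : ℝ × ℝ) = σ • ((1 : ℝ), (0 : ℝ)) + σs • ((0 : ℝ), (1 : ℝ)) := by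
      simp [Prod.ext_iff]
    have hsum : L (1, 0) + L (0, 1) = 1 := by
      have : ((1, 1) : ℝ × ℝ) = (1, 0) + (0, 1) := by simp [Prod.ext_iff]
      rw [this, map_add] at hdiag
      exact hdiag
    have h10 : L (1, 0) = 1 / 2 := by linarith [hswapEq]
    have h01 : L (0, 1) = 1 / 2 := by linarith [hswapEq]
    rw [hdecomp, map_add, map_smul, map_smul, h10, h01, smul_eq_mul, smul_eq_mul]
    linarith [hσ]
  -- the curve g
  set g : ℝ → ℝ := fun t => F (1 + σ * t, 1 + σs * t) with hg
  have hg0 : g 0 = 1 := by simp [hg, hF, hNtt]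
  have hgd : HasDerivAt g (1 / 2) 0 := by
    have h1 : HasDerivAt (fun t : ℝ => 1 + σ * t) σ 0 := by
      simpa using (((hasDerivAt_id (0 : ℝ)).const_mul σ).const_add 1)
    have h2 : HasDerivAt (fun t : ℝ => 1 + σs * t) σs 0 := by
      simpa using (((hasDerivAt_id (0 : ℝ)).const_mul σs).const_add 1)
    have hc : HasDerivAt (fun t : ℝ => ((1 + σ * t, 1 + σs * t) : ℝ × ℝ)) (σ, σs) 0 := h1.prodMk h2
    have : HasDerivAt g (L (σ, σs)) 0 := by
      have hFd' : HasFDerivAt F L (1 + σ * 0, 1 + σs * 0) := by simpa using hFd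
      have := hFd'.comp_hasDerivAt 0 hc
      simpa [hg, Function.comp_def] using this
    rwa [hLval] at this
  have hslope : Tendsto (slope g 0) (𝓝[≠] (0 : ℝ)) (𝓝 (1 / 2)) :=
    hasDerivAt_iff_tendsto_slope.mp hgd
  have hinv : Tendsto (fun x : ℝ => 1 / x) atTop (𝓝[≠] (0 : ℝ)) := by
    rw [tendsto_nhdsWithin_iff]
    constructor
    · simpa using tendsto_inv_atTop_zero
    · filter_upwards [eventually_gt_atTop (0 : ℝ)] with x hx
      simpa [mem_compl_iff] using (one_div_pos.mpr hx).ne'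
  have hmain : Tendsto (fun x : ℝ => slope g 0 (1 / x) - 1 / 2) atTop (𝓝 0) := by
    have := (hslope.comp hinv).sub_const (1 / 2)
    simpa using this
  refine hmain.congr' ?_
  filter_upwards [eventually_gt_atTop (0 : ℝ)] with x hx
  have hxne : x ≠ 0 := ne_of_gt hx
  have hhx := hhom x hx (1 + σ * (1 / x)) (1 + σs * (1 / x))
  have h1 : x * (1 + σ * (1 / x)) = x + σ := by field_simp
  have h2 : x * (1 + σs * (1 / x)) = x + σs := by field_simp
  rw [h1, h2] at hhx
  have hslope_eval : slope g 0 (1 / x) = x * (g (1 / x) - 1) := by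
    rw [slope_def_field]
    rw [hg0]
    field_simp
    ring
  rw [hslope_eval]
  simp only [hg, hF]
  rw [hhx]
  ring
end

section
/- Let M be a symmetric, homogeneous, differentiable bivariate mean on (0,∞)², N a symmetric, homogeneous, differentiable bivariate mean on ℝ², and θ+θ*=σ+σ*=1 fixed reals. Then lim_{x→∞} [ ln Γ(x+1) − (1/2)ln(2π) − (x+1/2)·ln M(x+θ, x+θ*) + N(x+σ, x+σ*) ] = 0. -/
open Filter Real Set

section GammaAsymptoticAux

open Topology

private noncomputable def hfun (x : ℝ) : ℝ := (x + 1/2) * Real.log (x + 1/2) - (x + 1/2)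

private lemma xlogx_lb {u v : ℝ} (hu : 0 < u) (huv : u ≤ v) :
    (v - u) * Real.log u ≤ v * Real.log v - u * Real.log u - (v - u) := by
  have hv : 0 < v := lt_of_lt_of_le hu huv
  have h1 : Real.log (u / v) ≤ u / v - 1 := Real.log_le_sub_one_of_pos (by positivity)
  have h2 : Real.log (u / v) = Real.log u - Real.log v := Real.log_div (ne_of_gt hu) (ne_of_gt hv)
  rw [h2] at h1
  have := mul_le_mul_of_nonneg_left h1 (le_of_lt hv)
  have hdiv : v * (u / v) = u := by field_simp
  nlinarith

private lemma xlogx_ub {u v : ℝ} (hu : 0 < u) (huv : u ≤ v) :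
    v * Real.log v - u * Real.log u - (v - u) ≤ (v - u) * Real.log v := by
  have hv : 0 < v := lt_of_lt_of_le hu huv
  have h1 : Real.log (v / u) ≤ v / u - 1 := Real.log_le_sub_one_of_pos (by positivity)
  have h2 : Real.log (v / u) = Real.log v - Real.log u := Real.log_div (ne_of_gt hv) (ne_of_gt hu)
  rw [h2] at h1
  have := mul_le_mul_of_nonneg_left h1 (le_of_lt hu)
  have hdiv : u * (v / u) = v := by field_simp
  nlinarith

private lemma hfun_lb {a b : ℝ} (ha : -(1/2) < a) (hab : a ≤ b) :
    (b - a) * Real.log (a + 1/2) ≤ hfun b - hfun a := by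
  have := xlogx_lb (u := a + 1/2) (v := b + 1/2) (by linarith) (by linarith)
  unfold hfun; nlinarith [this]

private lemma hfun_ub {a b : ℝ} (ha : -(1/2) < a) (hab : a ≤ b) :
    hfun b - hfun a ≤ (b - a) * Real.log (b + 1/2) := by
  have := xlogx_ub (u := a + 1/2) (v := b + 1/2) (by linarith) (by linarith)
  unfold hfun; nlinarith [this]

private lemma nat_stirling :
    Tendsto (fun n : ℕ => Real.log (n.factorial) - hfun n) atTop
      (𝓝 ((1/2) * Real.log (2 * π))) := by
  have hπ : (0:ℝ) < π := Real.pi_pos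
  have h1 : Tendsto (fun n : ℕ => Real.log (Stirling.stirlingSeq n)) atTop
      (𝓝 (Real.log (Real.sqrt π))) :=
    ((Real.continuousAt_log (by positivity)).tendsto).comp Stirling.tendsto_stirlingSeq_sqrt_pi
  have h2 : Tendsto (fun n : ℕ => (n : ℝ) * Real.log (1 + (1/2) / n)) atTop (𝓝 (1/2)) :=
    (tendsto_mul_log_one_add_div_atTop (1/2)).comp tendsto_natCast_atTop_atTop
  have h3 : Tendsto (fun n : ℕ => Real.log (1 + (1/2) / n)) atTop (𝓝 0) := by
    have : Tendsto (fun n : ℕ => 1 + (1/2) / (n:ℝ)) atTop (𝓝 1) := by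
      simpa using (tendsto_const_nhds (x := (1:ℝ))).add
        ((tendsto_const_nhds (x := (1/2:ℝ))).div_atTop tendsto_natCast_atTop_atTop)
    simpa [Function.comp_def] using ((Real.continuousAt_log (by norm_num)).tendsto).comp this
  have key : Tendsto (fun n : ℕ => Real.log (Stirling.stirlingSeq n) + (1/2) * Real.log 2
      + 1/2 - ((n : ℝ) * Real.log (1 + (1/2)/n) + (1/2) * Real.log (1 + (1/2)/n))) atTop
      (𝓝 (Real.log (Real.sqrt π) + (1/2) * Real.log 2 + 1/2 - (1/2 + (1/2) * 0))) := by
    exact ((h1.add tendsto_const_nhds).add tendsto_const_nhds).sub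
      (h2.add (h3.const_mul _))
  have heq : ∀ᶠ n : ℕ in atTop, Real.log (Stirling.stirlingSeq n) + (1/2) * Real.log 2
      + 1/2 - ((n : ℝ) * Real.log (1 + (1/2)/n) + (1/2) * Real.log (1 + (1/2)/n))
      = Real.log (n.factorial) - hfun n := by
    filter_upwards [eventually_ge_atTop 1] with n hn
    have hn0 : (0:ℝ) < n := by exact_mod_cast hn
    rw [Stirling.log_stirlingSeq_formula]
    have e1 : Real.log (2 * n) = Real.log 2 + Real.log n :=
      Real.log_mul (by norm_num) (ne_of_gt hn0)
    have e2 : Real.log ((n:ℝ) / Real.exp 1) = Real.log n - 1 := by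
      rw [Real.log_div (ne_of_gt hn0) (Real.exp_ne_zero 1), Real.log_exp]
    have e3 : Real.log ((n:ℝ) + 1/2) = Real.log n + Real.log (1 + (1/2)/n) := by
      rw [← Real.log_mul (ne_of_gt hn0) (by positivity)]
      congr 1; field_simp
    unfold hfun
    rw [e1, e2, e3]; ring
  have := key.congr' heq
  convert this using 2
  rw [Real.log_sqrt (le_of_lt hπ), Real.log_mul (by norm_num) (ne_of_gt hπ)]
  ring

private lemma log_shift_tendsto (c : ℝ) :
    Tendsto (fun n : ℕ => Real.log ((n:ℝ) + c) - Real.log n) atTop (𝓝 0) := by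
  have h : Tendsto (fun n : ℕ => 1 + c / (n:ℝ)) atTop (𝓝 1) := by
    simpa using (tendsto_const_nhds (x := (1:ℝ))).add
      ((tendsto_const_nhds (x := c)).div_atTop tendsto_natCast_atTop_atTop)
  have h2 : Tendsto (fun n : ℕ => Real.log (1 + c / (n:ℝ))) atTop (𝓝 0) := by
    simpa [Function.comp_def] using ((Real.continuousAt_log (by norm_num)).tendsto).comp h
  refine h2.congr' ?_
  filter_upwards [eventually_gt_atTop (max 1 (Nat.ceil |c|))] with n hn
  have hn1 : (1:ℝ) ≤ n := by exact_mod_cast le_of_lt (lt_of_le_of_lt (le_max_left _ _) hn)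
  have hc : |c| < n := by
    calc |c| ≤ Nat.ceil |c| := Nat.le_ceil _
    _ < n := by exact_mod_cast lt_of_le_of_lt (le_max_right _ _) hn
  have hn0 : (0:ℝ) < n := by linarith
  have hnc : (0:ℝ) < n + c := by
    have := abs_lt.mp hc; linarith [this.1]
  rw [show (1 : ℝ) + c / n = (n + c) / n by field_simp,
    Real.log_div (ne_of_gt hnc) (ne_of_gt hn0)]

private lemma real_stirling :
    Tendsto (fun x : ℝ => Real.log (Real.Gamma (x + 1)) - hfun x) atTop
      (𝓝 ((1/2) * Real.log (2 * π))) := by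
  set L := (1/2) * Real.log (2 * π) with hL
  set Dn : ℕ → ℝ := fun n => Real.log (n.factorial) - hfun n with hDn
  set lo : ℕ → ℝ := fun n => Dn n - (Real.log ((n:ℝ) + 3/2) - Real.log n) with hlo
  set hi : ℕ → ℝ := fun n => Dn n
      + ((Real.log ((n:ℝ) + 1) - Real.log n) - (Real.log ((n:ℝ) + 1/2) - Real.log n)) with hhi
  have hloT : Tendsto lo atTop (𝓝 L) := by
    simpa only [sub_zero] using nat_stirling.sub (log_shift_tendsto (3/2))
  have hhiT : Tendsto hi atTop (𝓝 L) := by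
    simpa only [sub_zero, add_zero] using
      nat_stirling.add ((log_shift_tendsto 1).sub (log_shift_tendsto (1/2)))
  have key : ∀ x : ℝ, 1 ≤ x →
      lo (Nat.floor x) ≤ Real.log (Real.Gamma (x + 1)) - hfun x ∧
      Real.log (Real.Gamma (x + 1)) - hfun x ≤ hi (Nat.floor x) := by
    intro x hx
    set n := Nat.floor x with hn
    have hn1 : 1 ≤ n := (Nat.one_le_floor_iff x).mpr hx
    have hn1' : (1:ℝ) ≤ n := by exact_mod_cast hn1
    have hnx : (n:ℝ) ≤ x := Nat.floor_le (by linarith)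
    have hxn : x < (n:ℝ) + 1 := Nat.lt_floor_add_one x
    set t := x - (n:ℝ) with ht
    have ht0 : 0 ≤ t := by simp only [ht]; linarith
    have ht1 : t ≤ 1 := by simp only [ht]; linarith
    have hconv := Real.convexOn_log_Gamma
    have hΓn : Real.log (Real.Gamma ((n:ℝ) + 1)) = Real.log (n.factorial) := by
      rw [Real.Gamma_nat_eq_factorial]
    have hup : Real.log (Real.Gamma (x + 1)) ≤ Real.log (n.factorial)
        + t * Real.log ((n:ℝ) + 1) := by
      have hmem1 : ((n:ℝ) + 1) ∈ Ioi (0:ℝ) := by simp only [mem_Ioi]; linarith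
      have hmem2 : ((n:ℝ) + 2) ∈ Ioi (0:ℝ) := by simp only [mem_Ioi]; linarith
      have h := hconv.2 hmem1 hmem2 (show (0:ℝ) ≤ 1 - t by linarith) ht0 (by ring)
      have harg : (1 - t) • ((n:ℝ) + 1) + t • ((n:ℝ) + 2) = x + 1 := by
        simp only [smul_eq_mul]; ring
      rw [harg] at h
      have hΓ2 : Real.log (Real.Gamma ((n:ℝ) + 2)) =
          Real.log ((n:ℝ) + 1) + Real.log (Real.Gamma ((n:ℝ) + 1)) := by
        rw [show ((n:ℝ) + 2) = ((n:ℝ) + 1) + 1 by ring,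
          Real.Gamma_add_one (by positivity),
          Real.log_mul (by positivity) (ne_of_gt (Real.Gamma_pos_of_pos (by positivity)))]
      simp only [Function.comp_apply, smul_eq_mul] at h
      rw [hΓ2, hΓn] at h
      nlinarith [h]
    have hdown : Real.log (n.factorial) + t * Real.log n ≤ Real.log (Real.Gamma (x + 1)) := by
      rcases eq_or_lt_of_le hnx with heq | hlt
      · have ht' : t = 0 := by simp [ht, ← heq]
        rw [ht', ← heq, hΓn]; simp
      · have hmemn : ((n:ℝ)) ∈ Ioi (0:ℝ) := by simp only [mem_Ioi]; linarith
        have hmemz : (x + 1) ∈ Ioi (0:ℝ) := by simp only [mem_Ioi]; linarith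
        have hsl := hconv.slope_mono_adjacent hmemn hmemz
          (show (n:ℝ) < (n:ℝ) + 1 by linarith) (show (n:ℝ) + 1 < x + 1 by linarith)
        have hΓ1 : Real.log (Real.Gamma ((n:ℝ) + 1)) =
            Real.log (n:ℝ) + Real.log (Real.Gamma (n:ℝ)) := by
          rw [Real.Gamma_add_one (by positivity),
            Real.log_mul (by positivity) (ne_of_gt (Real.Gamma_pos_of_pos (by positivity)))]
        simp only [Function.comp_apply] at hsl
        have hsimp1 : ((n:ℝ) + 1 - n) = 1 := by ring
        have hsimp2 : (x + 1 - ((n:ℝ) + 1)) = t := by ring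
        rw [hsimp1, hsimp2, div_one] at hsl
        have ht' : 0 < t := by simp only [ht]; linarith
        have hlogn : Real.log ((n:ℝ)) ≤ (Real.log (Real.Gamma (x + 1))
            - Real.log (Real.Gamma ((n:ℝ) + 1))) / t := by linarith
        have h3 := (le_div_iff₀ ht').mp hlogn
        rw [hΓn] at h3
        linarith
    have hflb := hfun_lb (a := (n:ℝ)) (b := x) (by linarith) hnx
    have hfub := hfun_ub (a := (n:ℝ)) (b := x) (by linarith) hnx
    have hlogmono : Real.log (x + 1/2) ≤ Real.log ((n:ℝ) + 3/2) :=
      Real.log_le_log (by linarith) (by linarith)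
    have lg1 : Real.log ((n:ℝ)) ≤ Real.log ((n:ℝ) + 3/2) :=
      Real.log_le_log (by linarith) (by linarith)
    have lg2 : Real.log ((n:ℝ) + 1/2) ≤ Real.log ((n:ℝ) + 1) :=
      Real.log_le_log (by linarith) (by linarith)
    have e1 : t * Real.log (x + 1/2) ≤ t * Real.log ((n:ℝ) + 3/2) :=
      mul_le_mul_of_nonneg_left hlogmono ht0
    rw [show x - (n:ℝ) = t from rfl] at hfub hflb
    clear_value t n
    constructor
    · have e2 : t * Real.log ((n:ℝ) + 3/2) - t * Real.log ((n:ℝ))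
          ≤ Real.log ((n:ℝ) + 3/2) - Real.log ((n:ℝ)) := by
        nlinarith [mul_le_mul_of_nonneg_right ht1 (sub_nonneg.mpr lg1)]
      simp only [hlo, hDn]
      linarith
    · have e2 : t * Real.log ((n:ℝ) + 1) - t * Real.log ((n:ℝ) + 1/2)
          ≤ Real.log ((n:ℝ) + 1) - Real.log ((n:ℝ) + 1/2) := by
        nlinarith [mul_le_mul_of_nonneg_right ht1 (sub_nonneg.mpr lg2)]
      simp only [hhi, hDn]
      linarith
  refine tendsto_of_tendsto_of_tendsto_of_le_of_le'
    (hloT.comp (tendsto_nat_floor_atTop (α := ℝ))) (hhiT.comp (tendsto_nat_floor_atTop (α := ℝ)))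
    ?_ ?_ <;>
  · filter_upwards [eventually_ge_atTop (1:ℝ)] with x hx
    first
      | exact (key x hx).1
      | exact (key x hx).2

private lemma mean_asymp (K : ℝ → ℝ → ℝ)
    (hKmean : ∀ a > (0:ℝ), ∀ b > (0:ℝ), min a b ≤ K a b ∧ K a b ≤ max a b)
    (hKsymm : ∀ a > (0:ℝ), ∀ b > (0:ℝ), K a b = K b a)
    (hKhom : ∀ t > (0:ℝ), ∀ a > (0:ℝ), ∀ b > (0:ℝ), K (t * a) (t * b) = t * K a b)
    (hKdiff : DifferentiableAt ℝ (fun p : ℝ × ℝ => K p.1 p.2) (1, 1))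
    (α αs : ℝ) (hα : α + αs = 1) :
    Tendsto (fun x : ℝ => K (x + α) (x + αs) - (x + 1/2)) atTop (𝓝 0) := by
  set F : ℝ × ℝ → ℝ := fun p => K p.1 p.2 with hF
  have hK11 : K 1 1 = 1 := by
    obtain ⟨h1, h2⟩ := hKmean 1 one_pos 1 one_pos
    simp only [min_self, max_self] at h1 h2
    linarith
  set L := fderiv ℝ F (1, 1) with hLdef
  have hFd : HasFDerivAt F L (1, 1) := hKdiff.hasFDerivAt
  have hdiag : HasDerivAt (fun t : ℝ => F (t, t)) (L (1, 1)) 1 := by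
    have hc : HasDerivAt (fun t : ℝ => ((t, t) : ℝ × ℝ)) ((1:ℝ), (1:ℝ)) 1 :=
      (hasDerivAt_id 1).prodMk (hasDerivAt_id 1)
    exact HasFDerivAt.comp_hasDerivAt (f := fun t : ℝ => ((t, t) : ℝ × ℝ)) 1 hFd hc
  have hdiag_eq : (fun t : ℝ => F (t, t)) =ᶠ[𝓝 (1:ℝ)] id := by
    filter_upwards [Ioi_mem_nhds (show (0:ℝ) < 1 by norm_num)] with t ht
    have := hKhom t ht 1 one_pos 1 one_pos
    simp only [mul_one] at this
    simp [hF, this, hK11]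
  have hL11 : L (1, 1) = 1 := by
    have h1 : HasDerivAt (fun t : ℝ => F (t, t)) 1 1 := by
      have : HasDerivAt (id : ℝ → ℝ) 1 1 := hasDerivAt_id 1
      exact this.congr_of_eventuallyEq hdiag_eq
    exact hdiag.unique h1
  have hswap : L (1, 0) = L (0, 1) := by
    set e : ℝ × ℝ →L[ℝ] ℝ × ℝ :=
      (ContinuousLinearMap.snd ℝ ℝ ℝ).prod (ContinuousLinearMap.fst ℝ ℝ ℝ) with he
    have heF : HasFDerivAt (fun p : ℝ × ℝ => F (p.2, p.1)) (L.comp e) (1, 1) := by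
      have h2 : HasFDerivAt (fun p : ℝ × ℝ => ((p.2, p.1) : ℝ × ℝ)) e (1, 1) := e.hasFDerivAt
      exact hFd.comp (1, 1) h2
    have heq : (fun p : ℝ × ℝ => F (p.2, p.1)) =ᶠ[𝓝 ((1:ℝ), (1:ℝ))] F := by
      have hopen : IsOpen (Ioi (0:ℝ) ×ˢ Ioi (0:ℝ)) := (isOpen_Ioi).prod isOpen_Ioi
      filter_upwards [hopen.mem_nhds (by constructor <;> simp)] with p hp
      exact (hKsymm p.2 hp.2 p.1 hp.1)
    have hF2 : HasFDerivAt F (L.comp e) (1, 1) := heF.congr_of_eventuallyEq heq.symm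
    have : L = L.comp e := hFd.unique hF2
    calc L (1, 0) = (L.comp e) (1, 0) := by rw [← this]
      _ = L (0, 1) := by simp [he]
  have hLhalf : L (α, αs) = 1/2 := by
    have hdecomp : ((α, αs) : ℝ × ℝ) = α • ((1:ℝ), (0:ℝ)) + αs • ((0:ℝ), (1:ℝ)) := by
      simp [Prod.ext_iff]
    have hsum : ((1,1) : ℝ × ℝ) = ((1:ℝ), (0:ℝ)) + ((0:ℝ), (1:ℝ)) := by simp
    have h2 : L (1, 0) + L (0, 1) = 1 := by rw [← L.map_add, ← hsum, hL11]
    rw [hdecomp, L.map_add, L.map_smul, L.map_smul]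
    simp only [smul_eq_mul]
    rw [← hswap] at h2 ⊢
    nlinarith [h2]
  set g : ℝ → ℝ := fun u => F (1 + α * u, 1 + αs * u) with hg
  have hgd : HasDerivAt g (1/2) 0 := by
    have hc1 : HasDerivAt (fun u : ℝ => 1 + α * u) α 0 := by
      simpa using ((hasDerivAt_id (0:ℝ)).const_mul α).const_add 1
    have hc2 : HasDerivAt (fun u : ℝ => 1 + αs * u) αs 0 := by
      simpa using ((hasDerivAt_id (0:ℝ)).const_mul αs).const_add 1
    have hc : HasDerivAt (fun u : ℝ => ((1 + α * u, 1 + αs * u) : ℝ × ℝ)) (α, αs) 0 :=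
      hc1.prodMk hc2
    have hFd' : HasFDerivAt F L (1 + α * 0, 1 + αs * 0) := by
      have : ((1 + α * 0, 1 + αs * 0) : ℝ × ℝ) = (1, 1) := by norm_num
      rw [this]; exact hFd
    have := HasFDerivAt.comp_hasDerivAt
      (f := fun u : ℝ => ((1 + α * u, 1 + αs * u) : ℝ × ℝ)) 0 hFd' hc
    rw [hLhalf] at this
    exact this
  have hslope : Tendsto (slope g 0) (𝓝[≠] 0) (𝓝 (1/2)) :=
    hasDerivAt_iff_tendsto_slope.mp hgd
  have hinv : Tendsto (fun x : ℝ => x⁻¹) atTop (𝓝[≠] (0:ℝ)) := by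
    refine tendsto_nhdsWithin_of_tendsto_nhds_of_eventually_within _ tendsto_inv_atTop_zero ?_
    filter_upwards [eventually_gt_atTop (0:ℝ)] with x hx
    simp [ne_of_gt (inv_pos.mpr hx)]
  have hcomp : Tendsto (fun x : ℝ => slope g 0 x⁻¹ - 1/2) atTop (𝓝 0) := by
    simpa using (hslope.comp hinv).sub_const (1/2)
  refine hcomp.congr' ?_
  filter_upwards [eventually_gt_atTop (max 1 (max |α| |αs|))] with x hx
  have hx1 : (1:ℝ) ≤ x := le_of_lt (lt_of_le_of_lt (le_max_left _ _) hx)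
  have hx0 : (0:ℝ) < x := by linarith
  have hxα : |α| < x := lt_of_le_of_lt (le_trans (le_max_left _ _) (le_max_right _ _)) hx
  have hxαs : |αs| < x := lt_of_le_of_lt (le_trans (le_max_right _ _) (le_max_right _ _)) hx
  have hxx : x * x⁻¹ = 1 := mul_inv_cancel₀ (ne_of_gt hx0)
  have h1 : (0:ℝ) < 1 + α * x⁻¹ := by
    nlinarith [mul_lt_mul_of_pos_right (abs_lt.mp hxα).1 (inv_pos.mpr hx0), hxx]
  have h2 : (0:ℝ) < 1 + αs * x⁻¹ := by
    nlinarith [mul_lt_mul_of_pos_right (abs_lt.mp hxαs).1 (inv_pos.mpr hx0), hxx]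
  have hhom := hKhom x hx0 _ h1 _ h2
  have harg1 : x * (1 + α * x⁻¹) = x + α := by field_simp
  have harg2 : x * (1 + αs * x⁻¹) = x + αs := by field_simp
  rw [harg1, harg2] at hhom
  have hg0 : g 0 = 1 := by simp [hg, hF, hK11]
  have hslope_eq : slope g 0 x⁻¹ = x * (g x⁻¹ - 1) := by
    rw [slope_def_field, hg0]
    field_simp [ne_of_gt hx0]
    ring
  rw [hslope_eq]
  have : K (x + α) (x + αs) = x * g x⁻¹ := hhom
  rw [this]
  ring

end GammaAsymptoticAux

theorem gamma_asymptotic_MN (M N : ℝ → ℝ → ℝ)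
    (hMmean : ∀ a > (0:ℝ), ∀ b > (0:ℝ), min a b ≤ M a b ∧ M a b ≤ max a b)
    (hMsymm : ∀ a > (0:ℝ), ∀ b > (0:ℝ), M a b = M b a)
    (hMhom : ∀ t > (0:ℝ), ∀ a > (0:ℝ), ∀ b > (0:ℝ), M (t * a) (t * b) = t * M a b)
    (hMdiff : ∀ a > (0:ℝ), ∀ b > (0:ℝ), DifferentiableAt ℝ (fun p : ℝ × ℝ => M p.1 p.2) (a, b))
    (hNmean : ∀ a b : ℝ, min a b ≤ N a b ∧ N a b ≤ max a b)
    (hNsymm : ∀ a b : ℝ, N a b = N b a)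
    (hNhom : ∀ t > (0:ℝ), ∀ a b : ℝ, N (t * a) (t * b) = t * N a b)
    (hNdiff : Differentiable ℝ (fun p : ℝ × ℝ => N p.1 p.2))
    (θ θs σ σs : ℝ) (hθ : θ + θs = 1) (hσ : σ + σs = 1) :
    Tendsto (fun x : ℝ => Real.log (Real.Gamma (x + 1)) - (1 / 2) * Real.log (2 * π)
        - (x + 1 / 2) * Real.log (M (x + θ) (x + θs)) + N (x + σ) (x + σs))
      atTop (nhds 0) := by
  have hA : Tendsto (fun x : ℝ => Real.log (Real.Gamma (x + 1)) - hfun x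
      - (1/2) * Real.log (2 * π)) atTop (nhds 0) := by
    simpa using real_stirling.sub_const ((1/2) * Real.log (2 * π))
  have hC : Tendsto (fun x : ℝ => N (x + σ) (x + σs) - (x + 1/2)) atTop (nhds 0) :=
    mean_asymp N (fun a _ b _ => hNmean a b) (fun a _ b _ => hNsymm a b)
      (fun t ht a _ b _ => hNhom t ht a b) (hNdiff (1, 1)) σ σs hσ
  have hδM : Tendsto (fun x : ℝ => M (x + θ) (x + θs) - (x + 1/2)) atTop (nhds 0) :=
    mean_asymp M hMmean hMsymm hMhom (hMdiff 1 one_pos 1 one_pos) θ θs hθ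
  -- ratio M / (x + 1/2) → 1
  have hhalf : Tendsto (fun x : ℝ => x + (1/2 : ℝ)) atTop atTop :=
    tendsto_atTop_add_const_right _ _ tendsto_id
  have hinvhalf : Tendsto (fun x : ℝ => (x + (1/2:ℝ))⁻¹) atTop (nhds 0) :=
    tendsto_inv_atTop_zero.comp hhalf
  have hratio : Tendsto (fun x : ℝ => M (x + θ) (x + θs) / (x + 1/2)) atTop (nhds 1) := by
    have h0 : Tendsto (fun x : ℝ =>
        (M (x + θ) (x + θs) - (x + 1/2)) * (x + 1/2)⁻¹ + 1) atTop (nhds 1) := by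
      simpa using (hδM.mul hinvhalf).add_const 1
    refine h0.congr' ?_
    filter_upwards [eventually_ge_atTop (1:ℝ)] with x hx
    have hy : (0:ℝ) < x + 1/2 := by linarith
    field_simp
    ring
  have hr : Tendsto (fun x : ℝ => (x + 1/2) / M (x + θ) (x + θs)) atTop (nhds 1) := by
    have := hratio.inv₀ one_ne_zero
    simp only [inv_div, inv_one] at this
    exact this
  -- squeeze for B
  have hl : Tendsto (fun x : ℝ => (x + 1/2) - M (x + θ) (x + θs)) atTop (nhds 0) := by
    simpa using hδM.neg
  have hu : Tendsto (fun x : ℝ =>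
      ((x + 1/2) - M (x + θ) (x + θs)) * ((x + 1/2) / M (x + θ) (x + θs))) atTop (nhds 0) := by
    simpa using hl.mul hr
  have hMev : ∀ᶠ x : ℝ in atTop, 0 < M (x + θ) (x + θs) ∧ (0:ℝ) < x + 1/2 := by
    filter_upwards [eventually_ge_atTop (1 + |θ| + |θs|)] with x hx
    have ht1 : -|θ| ≤ θ := neg_abs_le θ
    have ht2 : -|θs| ≤ θs := neg_abs_le θs
    have hθ0 : (0:ℝ) < x + θ := by
      have : (0:ℝ) ≤ |θs| := abs_nonneg _
      linarith
    have hθs0 : (0:ℝ) < x + θs := by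
      have : (0:ℝ) ≤ |θ| := abs_nonneg _
      linarith
    have hmin := (hMmean _ hθ0 _ hθs0).1
    refine ⟨lt_of_lt_of_le (lt_min hθ0 hθs0) hmin, ?_⟩
    have : (0:ℝ) ≤ |θ| := abs_nonneg _
    have : (0:ℝ) ≤ |θs| := abs_nonneg _
    linarith
  have hB : Tendsto (fun x : ℝ =>
      (x + 1/2) * (Real.log (x + 1/2) - Real.log (M (x + θ) (x + θs)))) atTop (nhds 0) := by
    refine tendsto_of_tendsto_of_tendsto_of_le_of_le' hl hu ?_ ?_
    · filter_upwards [hMev] with x hx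
      obtain ⟨hMpos, hy⟩ := hx
      set Mx := M (x + θ) (x + θs)
      have hlog1 : 1 - Mx / (x + 1/2) ≤ Real.log ((x + 1/2) / Mx) := by
        have h := Real.log_le_sub_one_of_pos (show (0:ℝ) < Mx / (x + 1/2) by positivity)
        have hli : Real.log (Mx / (x + 1/2)) = - Real.log ((x + 1/2) / Mx) := by
          rw [← Real.log_inv, inv_div]
        linarith
      calc (x + 1/2) - Mx = (x + 1/2) * (1 - Mx / (x + 1/2)) := by
            rw [mul_sub, mul_one, mul_div_cancel₀ _ (ne_of_gt hy)]
        _ ≤ (x + 1/2) * Real.log ((x + 1/2) / Mx) :=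
            mul_le_mul_of_nonneg_left hlog1 (le_of_lt hy)
        _ = (x + 1/2) * (Real.log (x + 1/2) - Real.log Mx) := by
            rw [Real.log_div (ne_of_gt hy) (ne_of_gt hMpos)]
    · filter_upwards [hMev] with x hx
      obtain ⟨hMpos, hy⟩ := hx
      set Mx := M (x + θ) (x + θs)
      have hlog2 : Real.log ((x + 1/2) / Mx) ≤ (x + 1/2) / Mx - 1 :=
        Real.log_le_sub_one_of_pos (by positivity)
      calc (x + 1/2) * (Real.log (x + 1/2) - Real.log Mx)
          = (x + 1/2) * Real.log ((x + 1/2) / Mx) := by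
            rw [Real.log_div (ne_of_gt hy) (ne_of_gt hMpos)]
        _ ≤ (x + 1/2) * ((x + 1/2) / Mx - 1) :=
            mul_le_mul_of_nonneg_left hlog2 (le_of_lt hy)
        _ = ((x + 1/2) - Mx) * ((x + 1/2) / Mx) := by
            field_simp [ne_of_gt hMpos]
  have htotal := (hA.add hB).add hC
  simp only [add_zero] at htotal
  refine htotal.congr (fun x => ?_)
  unfold hfun
  ring
end

section
/- Let M be any bivariate mean on (0,∞)² (not necessarily symmetric or homogeneous) and θ, σ fixed real numbers. Then lim_{x→∞} [ ln Γ(x+1) − (1/2)ln(2π) − (x+1/2)·ln M(x+θ, x+σ) + M(x+θ, x+σ) ] = 0. -/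
open Filter Real Set


lemma key_aux {t y : ℝ} (hy : 0 < y) (ht : |t| ≤ y / 2) :
    |y * Real.log ((y + t) / y) - t| ≤ 2 * t ^ 2 / y := by
  have hu : (y + t) / y = 1 + t / y := by field_simp
  have hpos : 0 < 1 + t / y := by
    have h1 : -(1/2 : ℝ) ≤ t / y := by
      rw [le_div_iff₀ hy]; nlinarith [abs_le.1 ht]
    linarith
  have hup : Real.log (1 + t / y) ≤ t / y := by
    have := Real.log_le_sub_one_of_pos hpos; linarith
  have hlow : 1 - 1 / (1 + t / y) ≤ Real.log (1 + t / y) := by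
    have h2 := Real.log_le_sub_one_of_pos (one_div_pos.2 hpos)
    rw [Real.log_div one_ne_zero hpos.ne', Real.log_one] at h2
    linarith
  have hhalf : (1/2 : ℝ) ≤ 1 + t / y := by
    have h1 : -(1/2 : ℝ) ≤ t / y := by
      rw [le_div_iff₀ hy]; nlinarith [abs_le.1 ht]
    linarith
  rw [hu, abs_le]
  constructor
  · -- lower bound : -(2 t²/y) ≤ y log(1+t/y) - t
    have h3 : 1 - 1 / (1 + t / y) - t / y ≥ - (2 * (t/y)^2) := by
      have hne : (1 + t / y) ≠ 0 := hpos.ne'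
      set u := t / y with hu'
      have hk : (1 - 1/(1 + u) - u + 2*u^2) * (1 + u)
          = u^2 * (1 + 2*u) := by field_simp; ring
      nlinarith [sq_nonneg u, hpos, hhalf, mul_nonneg (sq_nonneg u) (by linarith : (0:ℝ) ≤ 1 + 2*u)]
    have := mul_le_mul_of_nonneg_left (by linarith [hlow, h3] : t / y - 2 * (t/y)^2 ≤ Real.log (1 + t/y)) hy.le
    have hty : y * (t / y) = t := by field_simp
    have hty2 : y * (2 * (t/y)^2) = 2 * t^2 / y := by field_simp
    nlinarith [this]
  · have := mul_le_mul_of_nonneg_left hup hy.le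
    have hty : y * (t / y) = t := by field_simp
    have h0 : 0 ≤ 2 * t ^ 2 / y := by positivity
    nlinarith

lemma key {α : Type*} {l : Filter α} (t y : α → ℝ) (C : ℝ)
    (hy : Tendsto y l atTop) (ht : ∀ᶠ x in l, |t x| ≤ C) :
    Tendsto (fun x => y x * Real.log ((y x + t x) / y x) - t x) l (nhds 0) := by
  apply squeeze_zero_norm' (a := fun x => 2 * C ^ 2 / y x)
  · filter_upwards [ht, hy.eventually_ge_atTop (max 1 (2 * C))] with x htx hyx
    have hy1 : (1:ℝ) ≤ y x := le_trans (le_max_left _ _) hyx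
    have hyC : 2 * C ≤ y x := le_trans (le_max_right _ _) hyx
    have hy0 : 0 < y x := lt_of_lt_of_le one_pos hy1
    have h1 : |t x| ≤ y x / 2 := by
      have hC0 : 0 ≤ C := le_trans (abs_nonneg _) htx
      linarith
    calc ‖y x * Real.log ((y x + t x) / y x) - t x‖ ≤ 2 * t x ^ 2 / y x := key_aux hy0 h1
      _ ≤ 2 * C ^ 2 / y x := by
          have hsq : t x ^ 2 ≤ C ^ 2 := by nlinarith [abs_le.1 htx, abs_nonneg (t x)]
          gcongr
  · exact Tendsto.div_atTop tendsto_const_nhds hy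


lemma stirlingInt : Tendsto (fun n : ℕ => Real.log n.factorial - ((n : ℝ) + 1/2) * Real.log n + n)
    atTop (nhds ((1/2) * Real.log (2 * π))) := by
  have h1 : Tendsto (fun n : ℕ => Real.log (Stirling.stirlingSeq n) + (1/2) * Real.log 2)
      atTop (nhds (Real.log (Real.sqrt π) + (1/2) * Real.log 2)) :=
    (Stirling.tendsto_stirlingSeq_sqrt_pi.log (by positivity)).add_const _
  have h2 : Real.log (Real.sqrt π) + (1/2) * Real.log 2 = (1/2) * Real.log (2 * π) := by
    rw [Real.log_sqrt Real.pi_pos.le, Real.log_mul two_ne_zero Real.pi_ne_zero]; ring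
  rw [h2] at h1
  apply h1.congr'
  filter_upwards [eventually_ge_atTop 1] with n hn
  have hn0 : (0:ℝ) < n := by exact_mod_cast hn
  rw [Stirling.log_stirlingSeq_formula, Real.log_mul two_ne_zero hn0.ne',
    Real.log_div hn0.ne' (Real.exp_ne_zero 1), Real.log_exp]
  ring

lemma phiNat : Tendsto (fun n : ℕ => Real.log n.factorial - ((n:ℝ) + 1/2) * Real.log ((n:ℝ) + 1/2)
    + ((n:ℝ) + 1/2)) atTop (nhds ((1/2) * Real.log (2 * π))) := by
  have hy : Tendsto (fun n : ℕ => (n:ℝ) + 1/2) atTop atTop :=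
    tendsto_atTop_add_const_right _ _ tendsto_natCast_atTop_atTop
  have hk := key (fun _ : ℕ => (-1/2 : ℝ)) (fun n : ℕ => (n:ℝ) + 1/2) (1/2) hy
    (Eventually.of_forall fun n => by rw [abs_of_nonpos (by norm_num)]; norm_num)
  have := stirlingInt.add hk
  rw [add_zero] at this
  apply this.congr'
  filter_upwards [eventually_ge_atTop 1] with n hn
  have hn0 : (0:ℝ) < n := by exact_mod_cast hn
  have ha : (0:ℝ) < (n:ℝ) + 1/2 := by linarith
  have : ((n:ℝ) + 1/2 + -1/2) / ((n:ℝ) + 1/2) = (n:ℝ) / ((n:ℝ) + 1/2) := by ring_nf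
  rw [this, Real.log_div hn0.ne' ha.ne']
  ring


lemma sandwich (n : ℕ) (hn : 1 ≤ n) (x : ℝ) (h1 : (n:ℝ) ≤ x) (h2 : x ≤ (n:ℝ) + 1) :
    (Real.log n.factorial - ((n:ℝ) + 1/2) * Real.log ((n:ℝ) + 1/2) + ((n:ℝ) + 1/2))
      - (Real.log ((n:ℝ) + 1/2) - Real.log n) - 1 / ((n:ℝ) + 1/2)
      ≤ Real.log (Real.Gamma (x + 1)) - (x + 1/2) * Real.log (x + 1/2) + (x + 1/2) ∧
    Real.log (Real.Gamma (x + 1)) - (x + 1/2) * Real.log (x + 1/2) + (x + 1/2)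
      ≤ (Real.log n.factorial - ((n:ℝ) + 1/2) * Real.log ((n:ℝ) + 1/2) + ((n:ℝ) + 1/2))
        + (Real.log ((n:ℝ) + 1) - Real.log ((n:ℝ) + 1/2)) := by
  have hn0 : (0:ℝ) < n := by exact_mod_cast hn
  set t : ℝ := x - n with htdef
  have ht0 : 0 ≤ t := by linarith
  have ht1 : t ≤ 1 := by linarith
  set a : ℝ := (n:ℝ) + 1/2 with hadef
  set b : ℝ := x + 1/2 with hbdef
  have ha0 : 0 < a := by positivity
  have hb0 : 0 < b := by simp only [hbdef]; linarith
  have hab : a ≤ b := by simp only [hadef, hbdef]; linarith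
  have hba : b - a = t := by simp only [hadef, hbdef, htdef]; ring
  have hΓ := Real.convexOn_log_Gamma
  -- (a) chord upper bound
  have chord : Real.log (Real.Gamma (x + 1)) ≤ Real.log n.factorial + t * Real.log ((n:ℝ) + 1) := by
    have hmem1 : ((n:ℝ) + 1) ∈ Ioi (0:ℝ) := by simp; positivity
    have hmem2 : ((n:ℝ) + 2) ∈ Ioi (0:ℝ) := by simp; positivity
    have hc := hΓ.2 hmem1 hmem2 (by linarith : (0:ℝ) ≤ 1 - t) ht0 (by ring)
    have hcomb : (1 - t) • ((n:ℝ) + 1) + t • ((n:ℝ) + 2) = x + 1 := by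
      simp only [smul_eq_mul, htdef]; ring
    rw [hcomb] at hc
    have hf1 : (Real.log ∘ Real.Gamma) ((n:ℝ) + 1) = Real.log n.factorial := by
      simp [Real.Gamma_nat_eq_factorial]
    have hf2 : (Real.log ∘ Real.Gamma) ((n:ℝ) + 2) = Real.log ((n:ℝ) + 1) + Real.log n.factorial := by
      have : ((n:ℝ) + 2) = ((n + 1 : ℕ) : ℝ) + 1 := by push_cast; ring
      simp only [Function.comp_apply, this, Real.Gamma_nat_eq_factorial]
      rw [Nat.factorial_succ]
      push_cast
      rw [Real.log_mul (by positivity) (by positivity : ((n.factorial :ℝ)) ≠ 0)]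
    rw [hf1, hf2] at hc
    simp only [Function.comp_apply, smul_eq_mul] at hc
    nlinarith [hc]
  -- (b) slope lower bound
  have slope : Real.log n.factorial + t * Real.log n ≤ Real.log (Real.Gamma (x + 1)) := by
    rcases eq_or_lt_of_le h1 with heq | hlt
    · have hx : x = (n:ℝ) := heq.symm
      have : t = 0 := by simp [htdef, hx]
      rw [this, zero_mul, add_zero, hx, Real.Gamma_nat_eq_factorial]
    · have hmem1 : (n:ℝ) ∈ Ioi (0:ℝ) := hn0
      have hmem2 : (x + 1) ∈ Ioi (0:ℝ) := by simp; linarith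
      have hs := hΓ.slope_mono_adjacent hmem1 hmem2
        (by linarith : (n:ℝ) < (n:ℝ) + 1) (by linarith : (n:ℝ) + 1 < x + 1)
      have hΓn : (0:ℝ) < Real.Gamma n := Real.Gamma_pos_of_pos hn0
      have hfn1 : (Real.log ∘ Real.Gamma) ((n:ℝ) + 1) = Real.log n + (Real.log ∘ Real.Gamma) (n:ℝ) := by
        simp only [Function.comp_apply]
        rw [Real.Gamma_add_one hn0.ne', Real.log_mul hn0.ne' hΓn.ne']
      have hfact : (Real.log ∘ Real.Gamma) ((n:ℝ) + 1) = Real.log n.factorial := by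
        simp [Real.Gamma_nat_eq_factorial]
      have ht0' : 0 < x - (n:ℝ) := by linarith
      have e1 : ((n:ℝ) + 1 - (n:ℝ)) = 1 := by ring
      have e2 : (x + 1 - ((n:ℝ) + 1)) = x - (n:ℝ) := by ring
      rw [e1, e2, div_one] at hs
      rw [le_div_iff₀ ht0'] at hs
      have hdiff : (Real.log ∘ Real.Gamma) ((n:ℝ)+1) - (Real.log ∘ Real.Gamma) (n:ℝ) = Real.log n := by
        rw [hfn1]; ring
      rw [hdiff, hfact] at hs
      simp only [Function.comp_apply] at hs
      have hteq : t * Real.log n = Real.log n * (x - (n:ℝ)) := by rw [htdef]; ring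
      linarith [hs, hteq]
  -- (c) bounds for the difference of h
  have hlogdiv : Real.log b - Real.log a = Real.log (b / a) :=
    (Real.log_div hb0.ne' ha0.ne').symm
  have c1 : b - a ≤ b * Real.log (b / a) := by
    have h2 := Real.log_le_sub_one_of_pos (div_pos ha0 hb0)
    have e3 : Real.log (a / b) = - Real.log (b / a) := by
      rw [Real.log_div ha0.ne' hb0.ne', Real.log_div hb0.ne' ha0.ne']; ring
    rw [e3] at h2
    have h3 : 1 - a / b ≤ Real.log (b / a) := by linarith
    have h4 := mul_le_mul_of_nonneg_left h3 hb0.le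
    have e4 : b * (1 - a / b) = b - a := by field_simp
    linarith
  have c2 : b * Real.log (b / a) ≤ (b - a) + 1 / a := by
    have h2 := Real.log_le_sub_one_of_pos (div_pos hb0 ha0)
    have h4 := mul_le_mul_of_nonneg_left h2 hb0.le
    have h5 : (b - a) ^ 2 ≤ 1 := by nlinarith
    have h6 : b * (b / a - 1) ≤ (b - a) + 1 / a := by
      have e5 : b * (b / a - 1) = (b - a) + (b - a) ^ 2 / a := by
        field_simp; ring
      have h7 : (b - a) ^ 2 / a ≤ 1 / a := by gcongr
      rw [e5]; linarith
    linarith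
  have hdiffeq : (b * Real.log b - b) - (a * Real.log a - a)
      = b * Real.log (b / a) + (b - a) * Real.log a - (b - a) := by
    rw [← hlogdiv]; ring
  -- (d) combine
  have hla : Real.log a ≤ Real.log ((n:ℝ) + 1) :=
    Real.log_le_log ha0 (by simp only [hadef]; linarith)
  have hln : Real.log (n:ℝ) ≤ Real.log a :=
    Real.log_le_log hn0 (by simp only [hadef]; linarith)
  have hprod : (b - a) * Real.log a = t * Real.log a := by rw [hba]
  constructor
  · have hmul := mul_le_mul_of_nonneg_right ht1 (by linarith : 0 ≤ Real.log a - Real.log (n:ℝ))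
    simp only [htdef, hadef, hbdef] at slope c2 hdiffeq hmul hprod ⊢
    linarith [slope, c2, hdiffeq, hmul, hprod]
  · have hmul := mul_le_mul_of_nonneg_right ht1
      (by linarith : 0 ≤ Real.log ((n:ℝ) + 1) - Real.log a)
    simp only [htdef, hadef, hbdef] at chord c1 hdiffeq hmul hprod ⊢
    linarith [chord, c1, hdiffeq, hmul, hprod]

lemma phiReal : Tendsto (fun x : ℝ => Real.log (Real.Gamma (x + 1))
    - (x + 1/2) * Real.log (x + 1/2) + (x + 1/2)) atTop (nhds ((1/2) * Real.log (2 * π))) := by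
  have hB2 : Tendsto (fun n : ℕ => 1 / ((n:ℝ) + 1/2)) atTop (nhds 0) :=
    Tendsto.div_atTop tendsto_const_nhds
      (tendsto_atTop_add_const_right _ _ tendsto_natCast_atTop_atTop)
  have hB1 : Tendsto (fun n : ℕ => Real.log ((n:ℝ) + 1/2) - Real.log n) atTop (nhds 0) := by
    apply tendsto_of_tendsto_of_tendsto_of_le_of_le' tendsto_const_nhds
      Real.tendsto_log_nat_add_one_sub_log
    · filter_upwards [eventually_ge_atTop 1] with n hn
      have hn0 : (0:ℝ) < n := by exact_mod_cast hn
      have := Real.log_le_log hn0 (by linarith : (n:ℝ) ≤ (n:ℝ) + 1/2)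
      linarith
    · filter_upwards [eventually_ge_atTop 1] with n hn
      have hn0 : (0:ℝ) < n := by exact_mod_cast hn
      have := Real.log_le_log (by linarith : (0:ℝ) < (n:ℝ) + 1/2)
        (by linarith : (n:ℝ) + 1/2 ≤ (n:ℝ) + 1)
      linarith
  have hB3 : Tendsto (fun n : ℕ => Real.log ((n:ℝ) + 1) - Real.log ((n:ℝ) + 1/2)) atTop
      (nhds 0) := by
    apply tendsto_of_tendsto_of_tendsto_of_le_of_le' tendsto_const_nhds
      Real.tendsto_log_nat_add_one_sub_log
    · filter_upwards [eventually_ge_atTop 1] with n hn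
      have hn0 : (0:ℝ) < n := by exact_mod_cast hn
      have := Real.log_le_log (by linarith : (0:ℝ) < (n:ℝ) + 1/2)
        (by linarith : (n:ℝ) + 1/2 ≤ (n:ℝ) + 1)
      linarith
    · filter_upwards [eventually_ge_atTop 1] with n hn
      have hn0 : (0:ℝ) < n := by exact_mod_cast hn
      have := Real.log_le_log hn0 (by linarith : (n:ℝ) ≤ (n:ℝ) + 1/2)
      linarith
  have hfloor : Tendsto (fun x : ℝ => ⌊x⌋₊) atTop atTop := tendsto_nat_floor_atTop
  have hlow : Tendsto (fun x : ℝ => (Real.log (⌊x⌋₊).factorial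
      - ((⌊x⌋₊:ℝ) + 1/2) * Real.log ((⌊x⌋₊:ℝ) + 1/2) + ((⌊x⌋₊:ℝ) + 1/2))
      - (Real.log ((⌊x⌋₊:ℝ) + 1/2) - Real.log (⌊x⌋₊:ℝ)) - 1 / ((⌊x⌋₊:ℝ) + 1/2)) atTop
      (nhds ((1/2) * Real.log (2 * π))) := by
    have := ((phiNat.comp hfloor).sub (hB1.comp hfloor)).sub (hB2.comp hfloor)
    simpa using this
  have hup : Tendsto (fun x : ℝ => (Real.log (⌊x⌋₊).factorial
      - ((⌊x⌋₊:ℝ) + 1/2) * Real.log ((⌊x⌋₊:ℝ) + 1/2) + ((⌊x⌋₊:ℝ) + 1/2))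
      + (Real.log ((⌊x⌋₊:ℝ) + 1) - Real.log ((⌊x⌋₊:ℝ) + 1/2))) atTop
      (nhds ((1/2) * Real.log (2 * π))) := by
    have := (phiNat.comp hfloor).add (hB3.comp hfloor)
    simpa using this
  apply tendsto_of_tendsto_of_tendsto_of_le_of_le' hlow hup
  · filter_upwards [eventually_ge_atTop 1] with x hx
    have hn : 1 ≤ ⌊x⌋₊ := Nat.le_floor (by exact_mod_cast hx)
    have h1 : ((⌊x⌋₊:ℕ):ℝ) ≤ x := Nat.floor_le (by linarith)
    have h2 : x ≤ ((⌊x⌋₊:ℕ):ℝ) + 1 := (Nat.lt_floor_add_one x).le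
    exact (sandwich ⌊x⌋₊ hn x h1 h2).1
  · filter_upwards [eventually_ge_atTop 1] with x hx
    have hn : 1 ≤ ⌊x⌋₊ := Nat.le_floor (by exact_mod_cast hx)
    have h1 : ((⌊x⌋₊:ℕ):ℝ) ≤ x := Nat.floor_le (by linarith)
    have h2 : x ≤ ((⌊x⌋₊:ℕ):ℝ) + 1 := (Nat.lt_floor_add_one x).le
    exact (sandwich ⌊x⌋₊ hn x h1 h2).2

theorem gamma_asymptotic_M (M : ℝ → ℝ → ℝ)
    (hmean : ∀ a > (0:ℝ), ∀ b > (0:ℝ), min a b ≤ M a b ∧ M a b ≤ max a b)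
    (θ σ : ℝ) :
    Tendsto (fun x : ℝ => Real.log (Real.Gamma (x + 1)) - (1 / 2) * Real.log (2 * π)
        - (x + 1 / 2) * Real.log (M (x + θ) (x + σ)) + M (x + θ) (x + σ))
      atTop (nhds 0) := by
  set C : ℝ := |min θ σ - 1/2| + |max θ σ - 1/2| with hC
  have hy : Tendsto (fun x : ℝ => x + 1/2) atTop atTop :=
    tendsto_atTop_add_const_right _ _ tendsto_id
  have hMbound : ∀ᶠ x : ℝ in atTop,
      x + min θ σ ≤ M (x + θ) (x + σ) ∧ M (x + θ) (x + σ) ≤ x + max θ σ := by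
    filter_upwards [eventually_ge_atTop (1 + |θ| + |σ|)] with x hx
    have hθ : 0 < x + θ := by
      have := abs_nonneg σ; have := neg_abs_le θ; linarith
    have hσ : 0 < x + σ := by
      have := abs_nonneg θ; have := neg_abs_le σ; linarith
    obtain ⟨hm1, hm2⟩ := hmean _ hθ _ hσ
    constructor
    · calc x + min θ σ = min (x + θ) (x + σ) := by rw [min_add_add_left]
        _ ≤ _ := hm1
    · calc M (x + θ) (x + σ) ≤ max (x + θ) (x + σ) := hm2
        _ = x + max θ σ := by rw [max_add_add_left]
  have ht : ∀ᶠ x : ℝ in atTop, |M (x + θ) (x + σ) - (x + 1/2)| ≤ C := by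
    filter_upwards [hMbound] with x ⟨hl, hr⟩
    rw [abs_le]
    constructor
    · have h1 := neg_abs_le (min θ σ - 1/2)
      have h2 := abs_nonneg (max θ σ - 1/2)
      simp only [hC]; linarith
    · have h1 := le_abs_self (max θ σ - 1/2)
      have h2 := abs_nonneg (min θ σ - 1/2)
      simp only [hC]; linarith
  have hkey := key (fun x : ℝ => M (x + θ) (x + σ) - (x + 1/2)) (fun x : ℝ => x + 1/2) C hy ht
  have hφ := phiReal.sub_const ((1/2) * Real.log (2 * π))
  rw [sub_self] at hφ
  have hmain := hφ.sub hkey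
  rw [sub_zero] at hmain
  apply hmain.congr'
  filter_upwards [hMbound, eventually_ge_atTop (1 + |θ| + |σ|)] with x ⟨hl, hr⟩ hx
  have hx2 : (0:ℝ) < x + 1/2 := by
    have := abs_nonneg θ; have := abs_nonneg σ; linarith
  have hM0 : 0 < M (x + θ) (x + σ) := by
    have h1 := neg_abs_le θ; have h2 := neg_abs_le σ
    have : -( |θ| + |σ| ) ≤ min θ σ := by
      rcases min_choice θ σ with h | h <;> rw [h] <;>
        [linarith [abs_nonneg σ]; linarith [abs_nonneg θ]]
    linarith
  have he : (x + 1/2 + (M (x + θ) (x + σ) - (x + 1/2))) / (x + 1/2)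
      = M (x + θ) (x + σ) / (x + 1/2) := by ring_nf
  rw [he, Real.log_div hM0.ne' hx2.ne']
  ring
end

section
/- Let M be a bivariate mean on (0,∞)², n ≥ 1 an integer, and θ, σ fixed real numbers. Then lim_{x→∞} [ ψ^(n)(x+1) − (−1)^{n−1}(n−1)! / M(x+θ, x+σ)^n ] = 0. -/
open Filter Real Set

/-- The digamma function `ψ = Γ'/Γ`. -/
noncomputable def digamma (x : ℝ) : ℝ := deriv Real.Gamma x / Real.Gamma x

namespace PolyAux

/-- auxiliary series whose value is `(-1)^(n+1)/n!` times the n-th polygamma -/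
noncomputable def pg (n : ℕ) (x : ℝ) : ℝ := ∑' k : ℕ, 1 / (x + k) ^ (n + 1)

lemma summable_base : Summable (fun k : ℕ => 1 / ((k : ℝ) + 1) ^ 2) := by
  have := (summable_nat_add_iff (f := fun k : ℕ => 1 / (k : ℝ) ^ 2) 1).mpr
    (summable_one_div_nat_pow.mpr one_lt_two)
  simpa using this

lemma summable_pg (n : ℕ) (hn : 1 ≤ n) {x : ℝ} (hx : 0 < x) :
    Summable (fun k : ℕ => 1 / (x + k) ^ (n + 1)) := by
  rw [← summable_nat_add_iff 1]
  refine Summable.of_nonneg_of_le (fun k => by positivity) (fun k => ?_) summable_base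
  have h1 : ((k : ℝ) + 1) ≤ x + (k + 1 : ℕ) := by push_cast; linarith
  have h2 : (1 : ℝ) ≤ (k : ℝ) + 1 := by have : (0:ℝ) ≤ k := Nat.cast_nonneg k; linarith
  have h3 : ((k : ℝ) + 1) ^ 2 ≤ (x + (k + 1 : ℕ)) ^ (n + 1) := by
    calc ((k : ℝ) + 1) ^ 2 ≤ ((k : ℝ) + 1) ^ (n + 1) :=
          pow_le_pow_right₀ h2 (by omega)
      _ ≤ (x + (k + 1 : ℕ)) ^ (n + 1) := by
          apply pow_le_pow_left₀ (by positivity) h1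
  exact one_div_le_one_div_of_le (by positivity) h3

lemma hasSum_telescope {x : ℝ} (hx : 0 < x) :
    HasSum (fun k : ℕ => 1 / (x + k) - 1 / (x + (k + 1 : ℕ))) (1 / x) := by
  have hnn : ∀ k : ℕ, 0 ≤ 1 / (x + k) - 1 / (x + (k + 1 : ℕ)) := by
    intro k
    have : (x + k) ≤ x + (k + 1 : ℕ) := by push_cast; linarith
    have h0 : 0 < x + (k : ℝ) := by positivity
    have := one_div_le_one_div_of_le h0 this
    linarith
  rw [hasSum_iff_tendsto_nat_of_nonneg hnn]
  have hsum : ∀ N : ℕ, ∑ k ∈ Finset.range N, (1 / (x + k) - 1 / (x + (k + 1 : ℕ)))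
      = 1 / x - 1 / (x + N) := by
    intro N
    have := Finset.sum_range_sub' (f := fun k : ℕ => 1 / (x + k)) N
    simpa using this
  simp only [hsum]
  have h0 : Tendsto (fun N : ℕ => x + (N:ℝ)) atTop atTop :=
    tendsto_atTop_add_const_left atTop x tendsto_natCast_atTop_atTop
  have : Tendsto (fun N : ℕ => 1 / (x + N)) atTop (nhds 0) :=
    h0.inv_tendsto_atTop.congr (fun n => (one_div _).symm)
  simpa using (tendsto_const_nhds (x := 1 / x)).sub this

lemma pg_nonneg (n : ℕ) {x : ℝ} (hx : 0 < x) : 0 ≤ pg n x :=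
  tsum_nonneg (fun k => by positivity)

lemma pg_le (n : ℕ) (hn : 1 ≤ n) {x : ℝ} (hx : 1 ≤ x) : pg n x ≤ 1 / x ^ 2 + 1 / x := by
  have hx0 : 0 < x := lt_of_lt_of_le one_pos hx
  have h1 : pg n x ≤ pg 1 x := by
    apply Summable.tsum_le_tsum _ (summable_pg n hn hx0) (summable_pg 1 le_rfl hx0)
    intro k
    have hb : (1 : ℝ) ≤ x + k := by have : (0:ℝ) ≤ k := Nat.cast_nonneg k; linarith
    exact one_div_le_one_div_of_le (by positivity) (pow_le_pow_right₀ hb (by omega))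
  refine h1.trans ?_
  have h2 : pg 1 x = 1 / (x + (0:ℕ)) ^ 2 + ∑' k : ℕ, 1 / (x + (k + 1 : ℕ)) ^ 2 := by
    rw [pg]
    exact Summable.tsum_eq_zero_add (summable_pg 1 le_rfl hx0)
  rw [h2]
  simp only [Nat.cast_zero, add_zero]
  gcongr
  have hs1 : Summable (fun k : ℕ => 1 / (x + (k + 1 : ℕ)) ^ 2) := by
    have := (summable_nat_add_iff (f := fun k : ℕ => 1 / (x + k) ^ 2) 1).mpr
      (by simpa using summable_pg 1 le_rfl hx0)
    exact this
  have hle : ∀ k : ℕ, 1 / (x + (k + 1 : ℕ)) ^ 2 ≤ 1 / (x + k) - 1 / (x + (k + 1 : ℕ)) := by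
    intro k
    have h0 : (0:ℝ) < x + k := by positivity
    have h0' : (0:ℝ) < x + (k + 1 : ℕ) := by positivity
    have hk : (0:ℝ) ≤ k := Nat.cast_nonneg k
    rw [div_sub_div _ _ h0.ne' h0'.ne', div_le_div_iff₀ (by positivity) (by positivity)]
    push_cast
    nlinarith [sq_nonneg (x + (k:ℝ))]
  calc (∑' k : ℕ, 1 / (x + (k + 1 : ℕ)) ^ 2)
      ≤ ∑' k : ℕ, (1 / (x + k) - 1 / (x + (k + 1 : ℕ))) :=
        Summable.tsum_le_tsum hle hs1 (hasSum_telescope hx0).summable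
    _ = 1 / x := (hasSum_telescope hx0).tsum_eq


lemma hasDerivAt_term (m k : ℕ) {y : ℝ} (hy : 0 < y + k) :
    HasDerivAt (fun y : ℝ => 1 / (y + k) ^ (m + 1))
      (-((m:ℝ) + 1) * (1 / (y + k) ^ (m + 2))) y := by
  have h1 : HasDerivAt (fun y : ℝ => (y + (k:ℝ)) ^ (m + 1))
      (((m:ℝ) + 1) * (y + k) ^ m) y := by
    have := ((hasDerivAt_id y).add_const (k:ℝ)).pow (m + 1)
    simp at this; exact this
  have hne : (y + (k:ℝ)) ^ (m + 1) ≠ 0 := by positivity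
  have h2 := h1.inv hne
  have heq : -(((m:ℝ) + 1) * (y + k) ^ m) / ((y + k) ^ (m + 1)) ^ 2
      = -((m:ℝ) + 1) * (1 / (y + k) ^ (m + 2)) := by
    have hne' : (y + (k:ℝ)) ≠ 0 := hy.ne'
    field_simp
    ring
  rw [heq] at h2
  simp only [one_div] at h2 ⊢; exact h2

lemma hasDerivAt_pg (n : ℕ) (hn : 1 ≤ n) {x : ℝ} (hx : 0 < x) :
    HasDerivAt (pg n) (-((n:ℝ) + 1) * pg (n + 1) x) x := by
  have hsub : x ∈ Ioo (x/2) (x+1) := ⟨by linarith, by linarith⟩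
  have hpos : ∀ y ∈ Ioo (x/2) (x+1), 0 < y := fun y hy => lt_trans (by linarith) hy.1
  refine hasDerivAt_of_tendstoUniformlyOn (f := fun (N : ℕ) (y : ℝ) => ∑ k ∈ Finset.range N, 1 / (y + k) ^ (n + 1))
    (f' := fun (N : ℕ) (y : ℝ) => ∑ k ∈ Finset.range N, (-((n:ℝ) + 1) * (1 / (y + k) ^ (n + 2))))
    (g := pg n) (g' := fun y => -((n:ℝ) + 1) * pg (n + 1) y) (l := atTop) isOpen_Ioo ?_ ?_ ?_ hsub
  · have hU := tendstoUniformlyOn_tsum_nat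
      (f := fun k (y:ℝ) => -((n:ℝ) + 1) * (1 / (y + k) ^ (n + 2)))
      (u := fun k => ((n:ℝ) + 1) * (1 / (x/2 + k) ^ (n + 2)))
      (((summable_pg (n+1) (by omega) (by linarith : (0:ℝ) < x/2))).mul_left _)
      (fun k y hy => by
        have h1 : (0:ℝ) < x/2 + k := by have := Nat.cast_nonneg (α := ℝ) k; linarith
        have h2 : x/2 + (k:ℝ) ≤ y + k := by have := hy.1; linarith
        have h3 : (0:ℝ) < y + k := lt_of_lt_of_le h1 h2
        rw [norm_mul, norm_neg, Real.norm_eq_abs, Real.norm_eq_abs,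
          abs_of_nonneg (by positivity : (0:ℝ) ≤ (n:ℝ) + 1),
          abs_of_nonneg (one_div_nonneg.mpr (pow_nonneg h3.le _))]
        exact mul_le_mul_of_nonneg_left
          (one_div_le_one_div_of_le (pow_pos h1 _) (pow_le_pow_left₀ h1.le h2 _))
          (by positivity))
      (s := Ioo (x/2) (x+1))
    refine hU.congr_right (fun y hy => ?_)
    beta_reduce
    rw [tsum_mul_left]
    have : pg (n+1) y = ∑' k : ℕ, 1 / (y + k) ^ (n + 2) := by
      simp [pg]
    rw [this]
  · filter_upwards with N y hy
    exact HasDerivAt.fun_sum (fun k _ => hasDerivAt_term n k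
      (by have := Nat.cast_nonneg (α := ℝ) k; have := hpos y hy; linarith))
  · intro y hy
    have := (summable_pg n hn (hpos y hy)).hasSum.tendsto_sum_nat
    simpa [pg] using this


local notation "γ" => Real.eulerMascheroniConstant

/-- series part of digamma -/
noncomputable def S (x : ℝ) : ℝ := ∑' k : ℕ, (1 / ((k:ℝ) + 1) - 1 / (x + ((k:ℝ) + 1)))

noncomputable def psi (x : ℝ) : ℝ := -γ - 1 / x + S x

lemma S_term_bound {y : ℝ} (hy : 0 < y) (c : ℝ) (hc : y ≤ c) (k : ℕ) :
    ‖1 / ((k:ℝ) + 1) - 1 / (y + ((k:ℝ) + 1))‖ ≤ c * (1 / ((k:ℝ) + 1) ^ 2) := by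
  have hk : (0:ℝ) ≤ k := Nat.cast_nonneg k
  have h1 : (0:ℝ) < (k:ℝ) + 1 := by linarith
  have h2 : (0:ℝ) < y + ((k:ℝ) + 1) := by linarith
  have hnn : 0 ≤ 1 / ((k:ℝ) + 1) - 1 / (y + ((k:ℝ) + 1)) := by
    have := one_div_le_one_div_of_le h1 (by linarith : (k:ℝ) + 1 ≤ y + ((k:ℝ) + 1))
    linarith
  rw [Real.norm_eq_abs, abs_of_nonneg hnn, div_sub_div _ _ h1.ne' h2.ne', mul_one_div,
    div_le_div_iff₀ (by positivity) (by positivity)]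
  nlinarith [mul_nonneg (mul_nonneg (sub_nonneg.mpr hc) h1.le) h1.le,
    mul_nonneg (mul_pos hy h1).le h1.le]

lemma summable_S {x : ℝ} (hx : 0 < x) :
    Summable (fun k : ℕ => 1 / ((k:ℝ) + 1) - 1 / (x + ((k:ℝ) + 1))) := by
  apply Summable.of_norm
  exact Summable.of_nonneg_of_le (fun k => norm_nonneg _)
    (fun k => S_term_bound hx x le_rfl k) (summable_base.mul_left x)

lemma tendstoUniformlyOn_constSeq {a : ℕ → ℝ} {c : ℝ} (h : Tendsto a atTop (nhds c))
    (s : Set ℝ) : TendstoUniformlyOn (fun n (_ : ℝ) => a n) (fun _ => c) atTop s := by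
  rw [Metric.tendstoUniformlyOn_iff]
  intro ε hε
  filter_upwards [Metric.tendsto_nhds.mp h ε hε] with n hn y _
  simpa [dist_comm] using hn

lemma tendstoUniformlyOn_self (h : ℝ → ℝ) (s : Set ℝ) :
    TendstoUniformlyOn (fun (_ : ℕ) y => h y) h atTop s := by
  intro u hu
  filter_upwards with n y _
  exact refl_mem_uniformity hu

lemma harmonic_cast (n : ℕ) : ((harmonic n : ℚ) : ℝ) = ∑ k ∈ Finset.range n, 1 / ((k:ℝ) + 1) := by
  rw [harmonic]
  push_cast
  simp [one_div]

lemma f'_eq (n : ℕ) {y : ℝ} (hy : 0 < y) :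
    Real.log n - ∑ j ∈ Finset.range (n+1), 1 / (y + (j:ℝ))
      = ((Real.log n - (harmonic n : ℚ)) + γ)
        + ((-γ - 1 / y) + ∑ k ∈ Finset.range n, (1 / ((k:ℝ) + 1) - 1 / (y + ((k:ℝ) + 1)))) := by
  have h1 : ∑ j ∈ Finset.range (n+1), 1 / (y + (j:ℝ))
      = (∑ k ∈ Finset.range n, 1 / (y + ((k:ℝ) + 1))) + 1 / y := by
    rw [Finset.sum_range_succ' (fun j => 1 / (y + (j:ℝ)))]
    simp only [Nat.cast_add, Nat.cast_one, Nat.cast_zero, add_zero]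
    try rw [add_comm]
  rw [h1, harmonic_cast, Finset.sum_sub_distrib]
  ring

lemma log_GammaSeq {y : ℝ} (hy : 0 < y) {n : ℕ} (hn : 1 ≤ n) :
    Real.log (Real.GammaSeq y n)
      = y * Real.log n + Real.log (Nat.factorial n : ℝ)
        - ∑ j ∈ Finset.range (n+1), Real.log (y + (j:ℝ)) := by
  have hn0 : (0:ℝ) < n := by exact_mod_cast hn
  have hprod : ∀ j ∈ Finset.range (n+1), y + (j:ℝ) ≠ 0 := by
    intro j _
    have : (0:ℝ) ≤ j := Nat.cast_nonneg j
    positivity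
  rw [Real.GammaSeq, Real.log_div (by positivity) (Finset.prod_ne_zero_iff.mpr hprod),
    Real.log_mul (by positivity) (by positivity), Real.log_rpow hn0, Real.log_prod hprod]

lemma hasDerivAt_logGamma {x : ℝ} (hx : 0 < x) :
    HasDerivAt (fun y => Real.log (Real.Gamma y)) (psi x) x := by
  have hsub : x ∈ Ioo (x/2) (x+1) := ⟨by linarith, by linarith⟩
  have hpos : ∀ y ∈ Ioo (x/2) (x+1), 0 < y := fun y hy => lt_trans (by linarith) hy.1
  refine hasDerivAt_of_tendstoUniformlyOn
    (f := fun (n : ℕ) (y : ℝ) => Real.log (Real.GammaSeq y n))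
    (f' := fun (n : ℕ) (y : ℝ) => Real.log n - ∑ j ∈ Finset.range (n+1), 1 / (y + (j:ℝ)))
    (g := fun y => Real.log (Real.Gamma y)) (g' := psi) (l := atTop)
    isOpen_Ioo ?_ ?_ ?_ hsub
  · -- uniform convergence of derivatives
    have TA : TendstoUniformlyOn
        (fun (n:ℕ) (_:ℝ) => (Real.log n - (harmonic n : ℚ)) + γ) (fun _ => 0) atTop
        (Ioo (x/2) (x+1)) := by
      apply tendstoUniformlyOn_constSeq
      have h := tendsto_harmonic_sub_log
      have := (tendsto_const_nhds (x := γ)).sub h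
      have h2 : Tendsto (fun n : ℕ => γ - ((harmonic n : ℚ) - Real.log n)) atTop (nhds 0) := by
        simpa using (tendsto_const_nhds (x := γ)).sub h
      exact h2.congr (fun n => by push_cast; ring)
    have TB : TendstoUniformlyOn
        (fun (n:ℕ) (y:ℝ) => ∑ k ∈ Finset.range n, (1 / ((k:ℝ) + 1) - 1 / (y + ((k:ℝ) + 1))))
        S atTop (Ioo (x/2) (x+1)) := by
      apply tendstoUniformlyOn_tsum_nat (u := fun k => (x+1) * (1 / ((k:ℝ) + 1) ^ 2))
        (summable_base.mul_left _)
      intro k y hy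
      exact S_term_bound (hpos y hy) (x+1) (le_of_lt hy.2) k
    have TC := tendstoUniformlyOn_self (fun y : ℝ => -γ - 1 / y) (Ioo (x/2) (x+1))
    have comb := TA.add (TC.add TB)
    refine (comb.congr ?_).congr_right ?_
    · filter_upwards with n y hy
      exact (f'_eq n (hpos y hy)).symm
    · intro y _
      simp [psi]
  · -- derivatives of approximants
    filter_upwards [eventually_ge_atTop 1] with n hn y hy
    have hy0 := hpos y hy
    have hG : HasDerivAt
        (fun z => z * Real.log n + Real.log (Nat.factorial n : ℝ)
          - ∑ j ∈ Finset.range (n+1), Real.log (z + (j:ℝ)))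
        (Real.log n - ∑ j ∈ Finset.range (n+1), 1 / (y + (j:ℝ))) y := by
      have h1 : HasDerivAt (fun z : ℝ => z * Real.log n + Real.log (Nat.factorial n : ℝ)) (Real.log n) y :=
        (hasDerivAt_mul_const _).add_const _
      have h2 : HasDerivAt (fun z : ℝ => ∑ j ∈ Finset.range (n+1), Real.log (z + (j:ℝ)))
          (∑ j ∈ Finset.range (n+1), 1 / (y + (j:ℝ))) y := by
        apply HasDerivAt.fun_sum
        intro j _
        have hj : (0:ℝ) ≤ j := Nat.cast_nonneg j
        have hne : y + (j:ℝ) ≠ 0 := by positivity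
        have := (Real.hasDerivAt_log hne).comp y ((hasDerivAt_id y).add_const (j:ℝ))
        simp [one_div] at this ⊢; exact this
      exact h1.sub h2
    apply hG.congr_of_eventuallyEq
    filter_upwards [isOpen_Ioo.eventually_mem hy] with z hz
    exact log_GammaSeq (hpos z hz) hn
  · -- pointwise convergence
    intro y hy
    have h := Real.GammaSeq_tendsto_Gamma y
    have hcont := (Real.continuousAt_log (Real.Gamma_pos_of_pos (hpos y hy)).ne').tendsto
    exact hcont.comp h

lemma digamma_eq {x : ℝ} (hx : 0 < x) : digamma x = psi x := by
  have hd : DifferentiableAt ℝ Real.Gamma x :=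
    Real.differentiableAt_Gamma (fun m => by
      have : (0:ℝ) ≤ m := Nat.cast_nonneg m
      intro hc; rw [hc] at hx; linarith)
  have h1 : HasDerivAt (fun y => Real.log (Real.Gamma y))
      (deriv Real.Gamma x / Real.Gamma x) x :=
    hd.hasDerivAt.log (Real.Gamma_pos_of_pos hx).ne'
  exact h1.unique (hasDerivAt_logGamma hx)

lemma hasDerivAt_S {x : ℝ} (hx : 0 < x) :
    HasDerivAt S (∑' k : ℕ, 1 / (x + ((k:ℝ) + 1)) ^ 2) x := by
  have hsub : x ∈ Ioo (x/2) (x+1) := ⟨by linarith, by linarith⟩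
  have hpos : ∀ y ∈ Ioo (x/2) (x+1), 0 < y := fun y hy => lt_trans (by linarith) hy.1
  have hsummand : ∀ {y : ℝ}, 0 < y → Summable (fun k : ℕ => 1 / (y + ((k:ℝ) + 1)) ^ 2) := by
    intro y hy
    have := (summable_nat_add_iff (f := fun k : ℕ => 1 / (y + (k:ℝ)) ^ 2) 1).mpr
      (by simpa using summable_pg 1 le_rfl hy)
    apply this.congr
    intro k
    push_cast
    ring_nf
  refine hasDerivAt_of_tendstoUniformlyOn
    (f := fun (N : ℕ) (y : ℝ) =>
      ∑ k ∈ Finset.range N, (1 / ((k:ℝ) + 1) - 1 / (y + ((k:ℝ) + 1))))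
    (f' := fun (N : ℕ) (y : ℝ) => ∑ k ∈ Finset.range N, 1 / (y + ((k:ℝ) + 1)) ^ 2)
    (g := S) (g' := fun y => ∑' k : ℕ, 1 / (y + ((k:ℝ) + 1)) ^ 2) (l := atTop)
    isOpen_Ioo ?_ ?_ ?_ hsub
  · apply tendstoUniformlyOn_tsum_nat (u := fun k => 1 / (x/2 + ((k:ℝ) + 1)) ^ 2)
      (hsummand (by linarith : (0:ℝ) < x/2))
    intro k y hy
    have hk : (0:ℝ) ≤ k := Nat.cast_nonneg k
    have h1 : (0:ℝ) < x/2 + ((k:ℝ) + 1) := by linarith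
    have h2 : x/2 + ((k:ℝ) + 1) ≤ y + ((k:ℝ) + 1) := by have := hy.1; linarith
    have h3 : (0:ℝ) < y + ((k:ℝ) + 1) := lt_of_lt_of_le h1 h2
    rw [Real.norm_eq_abs, abs_of_nonneg (one_div_nonneg.mpr (by positivity))]
    exact one_div_le_one_div_of_le (by positivity) (by nlinarith)
  · filter_upwards with N y hy
    apply HasDerivAt.fun_sum
    intro k _
    have hy0 := hpos y hy
    have hk : (0:ℝ) ≤ k := Nat.cast_nonneg k
    have h := hasDerivAt_term 0 (k+1) (y := y) (by push_cast; linarith)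
    have h2 : HasDerivAt (fun z : ℝ => 1 / ((k:ℝ) + 1) - 1 / (z + ((k:ℝ) + 1)) ^ 1)
        (-(-((0:ℝ) + 1) * (1 / (y + ((k:ℝ) + 1)) ^ 2))) y := by
      have h' : HasDerivAt (fun z : ℝ => 1 / (z + ((k:ℝ) + 1)) ^ 1)
          (-((0:ℝ) + 1) * (1 / (y + ((k:ℝ) + 1)) ^ 2)) y := by
        have := h
        push_cast at this
        convert this using 2
      exact h'.const_sub _
    have h3 : HasDerivAt (fun z : ℝ => 1 / ((k:ℝ) + 1) - 1 / (z + ((k:ℝ) + 1)))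
        (1 / (y + ((k:ℝ) + 1)) ^ 2) y := by
      simpa using h2
    exact h3
  · intro y hy
    exact (summable_S (hpos y hy)).hasSum.tendsto_sum_nat

lemma hasDerivAt_psi {x : ℝ} (hx : 0 < x) : HasDerivAt psi (pg 1 x) x := by
  have h1 : HasDerivAt (fun y : ℝ => -γ - 1 / y) (1 / x ^ 2) x := by
    have := (hasDerivAt_inv hx.ne').const_sub (-γ)
    simpa [one_div] using this
  have h2 := hasDerivAt_S hx
  have h3 := h1.add h2
  have hpg : pg 1 x = 1 / x ^ 2 + ∑' k : ℕ, 1 / (x + ((k:ℝ) + 1)) ^ 2 := by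
    rw [pg, Summable.tsum_eq_zero_add (summable_pg 1 le_rfl hx)]
    push_cast
    norm_num
  rw [hpg]
  exact h3.congr_of_eventuallyEq (by filter_upwards with z using by simp [psi])


lemma iteratedDeriv_digamma (m : ℕ) : ∀ {y : ℝ}, 0 < y →
    iteratedDeriv (m+1) digamma y
      = (-1:ℝ)^m * (Nat.factorial (m+1)) * pg (m+1) y := by
  induction m with
  | zero =>
    intro y hy
    have hev : digamma =ᶠ[nhds y] psi := by
      filter_upwards [isOpen_Ioi.eventually_mem (show y ∈ Ioi 0 from hy)] with z hz
      exact digamma_eq hz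
    have hd : HasDerivAt digamma (pg 1 y) y :=
      (hasDerivAt_psi hy).congr_of_eventuallyEq hev
    rw [iteratedDeriv_one, hd.deriv]
    norm_num
  | succ m ih =>
    intro y hy
    have hev : iteratedDeriv (m+1) digamma
        =ᶠ[nhds y] fun z => (-1:ℝ)^m * (Nat.factorial (m+1)) * pg (m+1) z := by
      filter_upwards [isOpen_Ioi.eventually_mem (show y ∈ Ioi 0 from hy)] with z hz
      exact ih hz
    have hd : HasDerivAt (fun z => (-1:ℝ)^m * (Nat.factorial (m+1)) * pg (m+1) z)
        ((-1:ℝ)^m * (Nat.factorial (m+1)) * (-(((m+1:ℕ):ℝ) + 1) * pg (m+2) y)) y :=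
      (hasDerivAt_pg (m+1) (by omega) hy).const_mul _
    rw [iteratedDeriv_succ, hev.deriv_eq, hd.deriv]
    have hfac : (Nat.factorial (m+2) : ℝ) = ((m:ℝ) + 2) * (Nat.factorial (m+1)) := by
      rw [Nat.factorial_succ]; push_cast; ring
    show _ = (-1:ℝ)^(m+1) * (Nat.factorial (m+1+1)) * pg (m+1+1) y
    rw [hfac]
    push_cast
    ring

end PolyAux

open PolyAux

theorem polygamma_asymptotic (M : ℝ → ℝ → ℝ)
    (hmean : ∀ a > (0:ℝ), ∀ b > (0:ℝ), min a b ≤ M a b ∧ M a b ≤ max a b)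
    (n : ℕ) (hn : 1 ≤ n) (θ σ : ℝ) :
    Tendsto (fun x : ℝ =>
        iteratedDeriv n digamma (x + 1)
          - (-1 : ℝ) ^ (n - 1) * (Nat.factorial (n - 1)) / (M (x + θ) (x + σ)) ^ n)
      atTop (nhds 0) := by
  obtain ⟨m, rfl⟩ : ∃ m, n = m + 1 := ⟨n - 1, (Nat.succ_pred_eq_of_pos hn).symm⟩
  have hA : Tendsto (fun x : ℝ => iteratedDeriv (m+1) digamma (x + 1)) atTop (nhds 0) := by
    have hpg : Tendsto (fun x : ℝ => pg (m+1) (x+1)) atTop (nhds 0) := by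
      have hb : Tendsto (fun x : ℝ => 1 / (x+1) ^ 2 + 1 / (x+1)) atTop (nhds 0) := by
        have h1 : Tendsto (fun x : ℝ => x + 1) atTop atTop :=
          tendsto_atTop_add_const_right _ 1 tendsto_id
        have h2 : Tendsto (fun x : ℝ => 1 / (x+1) ^ 2) atTop (nhds 0) := by
          have := ((tendsto_pow_atTop (two_ne_zero)).comp h1).inv_tendsto_atTop
          exact this.congr (fun x => (one_div _).symm)
        have h3 : Tendsto (fun x : ℝ => 1 / (x+1)) atTop (nhds 0) := by
          have := h1.inv_tendsto_atTop
          exact this.congr (fun x => (one_div _).symm)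
        simpa using h2.add h3
      apply squeeze_zero' ?_ ?_ hb
      · filter_upwards [eventually_gt_atTop 0] with x hx
        exact pg_nonneg _ (by linarith)
      · filter_upwards [eventually_ge_atTop 0] with x hx
        exact pg_le _ (by omega) (by linarith)
    have hconst := hpg.const_mul ((-1:ℝ)^m * (Nat.factorial (m+1)))
    rw [mul_zero] at hconst
    apply hconst.congr'
    filter_upwards [eventually_gt_atTop (-1:ℝ)] with x hx
    exact (iteratedDeriv_digamma m (by linarith : (0:ℝ) < x + 1)).symm
  have hB : Tendsto (fun x : ℝ =>
      (-1 : ℝ) ^ (m+1-1) * (Nat.factorial (m+1-1)) / (M (x + θ) (x + σ)) ^ (m+1))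
      atTop (nhds 0) := by
    have hM : Tendsto (fun x : ℝ => M (x + θ) (x + σ)) atTop atTop := by
      apply tendsto_atTop_mono' atTop ?_ (tendsto_atTop_add_const_right _ (min θ σ) tendsto_id)
      filter_upwards [eventually_gt_atTop (-θ), eventually_gt_atTop (-σ)] with x hθ hσ
      have h1 : 0 < x + θ := by linarith
      have h2 : 0 < x + σ := by linarith
      have := (hmean _ h1 _ h2).1
      calc x + min θ σ ≤ min (x + θ) (x + σ) :=
            le_min (by linarith [min_le_left θ σ]) (by linarith [min_le_right θ σ])
        _ ≤ M (x + θ) (x + σ) := this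
    have hMn : Tendsto (fun x : ℝ => (M (x + θ) (x + σ)) ^ (m+1)) atTop atTop :=
      (tendsto_pow_atTop (Nat.succ_ne_zero m)).comp hM
    exact tendsto_const_nhds.div_atTop hMn
  simpa using hA.sub hB
end

section
/- For every integer k ≥ 1 and every x > 0, (k−1)!/x^k + k!/(2x^{k+1}) < (−1)^{k+1}·ψ^(k)(x) < (k−1)!/x^k + k!/x^{k+1}. -/
set_option maxHeartbeats 1000000


open Real

open Real Filter Topology Set Finset

lemma add_nat_pos {x : ℝ} (hx : 0 < x) (m : ℕ) : 0 < x + m := by positivity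

lemma summable_inv_sq_succ : Summable fun m : ℕ => ((1 + (m:ℝ)) ^ 2)⁻¹ := by
  have h : Summable fun n : ℕ => 1 / (n:ℝ) ^ 2 :=
    Real.summable_one_div_nat_pow.mpr (by norm_num)
  have h2 := (summable_nat_add_iff 1).mpr h
  refine h2.congr fun m => ?_
  push_cast
  rw [one_div, add_comm]

lemma summable_inv_mul {a : ℝ} (ha : 0 < a) : Summable fun m : ℕ => ((1 + (m:ℝ)) * (a + m))⁻¹ := by
  set c := min a 1 with hc
  have hc0 : 0 < c := lt_min ha one_pos
  refine Summable.of_nonneg_of_le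
    (fun m => by positivity) (fun m => ?_) (summable_inv_sq_succ.mul_left (2/c))
  have hm0 : (0:ℝ) < 1 + m := by positivity
  have key : (c/2) * (1 + (m:ℝ)) ≤ a + m := by
    rcases Nat.eq_zero_or_pos m with rfl | hm
    · have h1 : c ≤ a := min_le_left _ _
      simp only [Nat.cast_zero, add_zero]
      nlinarith
    · have h1 : (1:ℝ) ≤ m := by exact_mod_cast hm
      have h2 : c ≤ 1 := min_le_right _ _
      nlinarith
  calc ((1 + (m:ℝ)) * (a + m))⁻¹ ≤ ((c/2) * ((1 + (m:ℝ))^2))⁻¹ := by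
        apply inv_anti₀ (by positivity)
        nlinarith
    _ = (2/c) * ((1 + (m:ℝ))^2)⁻¹ := by rw [mul_inv, inv_div]

lemma summable_inv_pow {a : ℝ} (ha : 0 < a) {p : ℕ} (hp : 2 ≤ p) :
    Summable fun m : ℕ => ((a + (m:ℝ)) ^ p)⁻¹ := by
  rw [← summable_nat_add_iff 1]
  refine Summable.of_nonneg_of_le (fun m => by positivity) (fun m => ?_) summable_inv_sq_succ
  have h1 : (1:ℝ) ≤ 1 + (m:ℝ) := le_add_of_nonneg_right (Nat.cast_nonneg m)
  have h2 : (1 + (m:ℝ)) ≤ a + ((m+1 : ℕ):ℝ) := by push_cast; linarith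
  have h3 : (1 + (m:ℝ))^2 ≤ (a + ((m+1:ℕ):ℝ))^p :=
    le_trans (pow_le_pow_right₀ h1 hp) (pow_le_pow_left₀ (by positivity) h2 p)
  exact inv_anti₀ (by positivity) h3

lemma geom_id (a : ℝ) (k : ℕ) :
    (a+1)^k - a^k = ∑ i ∈ range k, (a+1)^i * a^(k-1-i) := by
  have h := geom_sum₂_mul (a+1) a k
  simp only [add_sub_cancel_left, mul_one] at h
  linarith

lemma A2 {a : ℝ} (ha : 0 < a) {k : ℕ} (hk : 1 ≤ k) :
    (((a+1)^(k+1))⁻¹ : ℝ) < (1/(k:ℝ)) * ((a^k)⁻¹ - ((a+1)^k)⁻¹) := by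
  have hb : (0:ℝ) < a + 1 := by linarith
  have hk0 : (0:ℝ) < k := by exact_mod_cast hk
  have key : (k:ℝ) * (a^k * (a+1)^k) < ((a+1)^k - a^k) * (a+1)^(k+1) := by
    rw [geom_id, Finset.sum_mul]
    have hrw : (k:ℝ) * (a^k * (a+1)^k) = ∑ _i ∈ range k, a^k * (a+1)^k := by
      rw [Finset.sum_const, card_range, nsmul_eq_mul]
    rw [hrw]
    refine Finset.sum_lt_sum_of_nonempty (Finset.nonempty_range_iff.mpr (by omega)) fun i hi => ?_
    rw [Finset.mem_range] at hi
    have e1 : a^k = a^(k-1-i) * a^(i+1) := by rw [← pow_add]; congr 1; omega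
    have e2 : ((a+1):ℝ)^i * (a+1)^(k+1) = (a+1)^(i+1) * (a+1)^k := by
      rw [← pow_add, ← pow_add]; congr 1; omega
    have h3 : a^(i+1) < (a+1)^(i+1) := pow_lt_pow_left₀ (by linarith) ha.le (by omega)
    calc a^k * (a+1)^k = a^(k-1-i) * (a^(i+1) * (a+1)^k) := by rw [e1]; ring
      _ < a^(k-1-i) * ((a+1)^(i+1) * (a+1)^k) := by
          apply mul_lt_mul_of_pos_left _ (by positivity)
          exact mul_lt_mul_of_pos_right h3 (by positivity)
      _ = (a+1)^i * a^(k-1-i) * (a+1)^(k+1) := by rw [← e2]; ring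
  have hrw : (1/(k:ℝ)) * ((a^k)⁻¹ - ((a+1)^k)⁻¹) = ((a+1)^k - a^k) / ((k:ℝ) * a^k * (a+1)^k) := by
    rw [eq_div_iff (by positivity)]
    field_simp
  rw [hrw, inv_eq_one_div, div_lt_div_iff₀ (by positivity) (by positivity)]
  nlinarith [key]

lemma A3 {a : ℝ} (ha : 0 < a) {k : ℕ} (hk : 1 ≤ k) :
    (1/(k:ℝ)) * ((a^k)⁻¹ - ((a+1)^k)⁻¹) < ((a^(k+1))⁻¹ + ((a+1)^(k+1))⁻¹)/2 := by
  have hb : (0:ℝ) < a + 1 := by linarith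
  have hk0 : (0:ℝ) < k := by exact_mod_cast hk
  have hA : (0:ℝ) < a^k := by positivity
  have hB : (0:ℝ) < (a+1)^k := by positivity
  have key : 2 * ((a*(a+1)) * ((a+1)^k - a^k)) < (k:ℝ) * (a^k * a + (a+1)^k * (a+1)) := by
    rw [geom_id]
    set f : ℕ → ℝ := fun i => (a*(a+1)) * ((a+1)^i * a^(k-1-i)) with hfdef
    have h2 : ∑ i ∈ range k, (f i + f (k-1-i))
        = 2 * ((a*(a+1)) * ∑ i ∈ range k, (a+1)^i * a^(k-1-i)) := by
      rw [Finset.sum_add_distrib, Finset.sum_range_reflect (fun i => f i) k]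
      simp only [hfdef]
      rw [← Finset.mul_sum]
      ring
    rw [← h2]
    have hrw : (k:ℝ) * (a^k * a + (a+1)^k * (a+1))
        = ∑ _i ∈ range k, (a^k * a + (a+1)^k * (a+1)) := by
      rw [Finset.sum_const, card_range, nsmul_eq_mul]
    rw [hrw]
    refine Finset.sum_lt_sum_of_nonempty (Finset.nonempty_range_iff.mpr (by omega)) fun i hi => ?_
    rw [Finset.mem_range] at hi
    have e1 : f i = (a+1)^(i+1) * a^(k-i) := by
      simp only [hfdef]
      rw [pow_succ, show k - i = (k-1-i)+1 by omega, pow_succ]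
      ring
    have e2 : f (k-1-i) = (a+1)^(k-i) * a^(i+1) := by
      simp only [hfdef]
      rw [show k - i = (k-1-i)+1 by omega, pow_succ, pow_succ, show k - 1 - (k-1-i) = i by omega]
      ring
    have e3 : a^k * a = a^(i+1) * a^(k-i) := by rw [← pow_succ, ← pow_add]; congr 1; omega
    have e4 : ((a+1):ℝ)^k * (a+1) = (a+1)^(i+1) * (a+1)^(k-i) := by
      rw [← pow_succ, ← pow_add]; congr 1; omega
    rw [e1, e2, e3, e4]
    have hXY : a^(i+1) < (a+1)^(i+1) := pow_lt_pow_left₀ (by linarith) ha.le (by omega)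
    have hZW : a^(k-i) < (a+1)^(k-i) := pow_lt_pow_left₀ (by linarith) ha.le (by omega)
    nlinarith [mul_pos (sub_pos.2 hXY) (sub_pos.2 hZW)]
  have hrw1 : (1/(k:ℝ)) * ((a^k)⁻¹ - ((a+1)^k)⁻¹)
      = ((a+1)^k - a^k) / ((k:ℝ) * a^k * (a+1)^k) := by
    rw [eq_div_iff (by positivity)]
    field_simp
  have hrw2 : ((a^(k+1))⁻¹ + ((a+1)^(k+1))⁻¹)/2
      = (a^(k+1) + (a+1)^(k+1)) / (2 * a^(k+1) * (a+1)^(k+1)) := by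
    rw [eq_div_iff (by positivity)]
    field_simp
    ring
  rw [hrw1, hrw2, div_lt_div_iff₀ (by positivity) (by positivity), pow_succ a k, pow_succ (a+1) k]
  nlinarith [mul_lt_mul_of_pos_right key (mul_pos hA hB)]

noncomputable def Sp (p : ℕ) (x : ℝ) : ℝ := ∑' m : ℕ, ((x + m) ^ p)⁻¹

lemma cast_succ_add (x : ℝ) (m : ℕ) : x + ((m+1:ℕ):ℝ) = (x + m) + 1 := by push_cast; ring

section TeleSec
variable {x : ℝ} (hx : 0 < x) {k : ℕ} (hk : 1 ≤ k)

include hx hk in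
lemma tele_hasSum :
    HasSum (fun m : ℕ => (1/(k:ℝ)) * (((x+m)^k)⁻¹ - ((x+(m+1:ℕ))^k)⁻¹))
      ((1/(k:ℝ)) * (x^k)⁻¹) := by
  set G : ℕ → ℝ := fun m => (1/(k:ℝ)) * ((x+m)^k)⁻¹ with hG
  have hk0 : (0:ℝ) < k := by exact_mod_cast hk
  have hGpos : ∀ m, 0 ≤ G m := fun m => by
    have := add_nat_pos hx m; positivity
  have hmono : ∀ m : ℕ, G (m+1) ≤ G m := by
    intro m
    have h1 : (0:ℝ) < x + m := add_nat_pos hx m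
    have h2 : (x+(m:ℝ))^k ≤ (x+((m+1:ℕ):ℝ))^k := by
      apply pow_le_pow_left₀ h1.le
      push_cast; linarith
    simp only [hG]
    exact mul_le_mul_of_nonneg_left (inv_anti₀ (by positivity) h2) (by positivity)
  have hsum : ∀ n : ℕ, ∑ i ∈ range n, (G i - G (i+1)) = G 0 - G n :=
    fun n => Finset.sum_range_sub' G n
  have hnn : ∀ m : ℕ, 0 ≤ G m - G (m+1) := fun m => sub_nonneg.2 (hmono m)
  have hSummable : Summable (fun m : ℕ => G m - G (m+1)) := by
    apply summable_of_sum_range_le (c := G 0) hnn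
    intro n
    rw [hsum n]
    have := hGpos n
    linarith
  have hG0 : G 0 = (1/(k:ℝ)) * (x^k)⁻¹ := by simp [hG]
  have hGlim : Tendsto G atTop (𝓝 0) := by
    have h1 : Tendsto (fun m : ℕ => x + (m:ℝ)) atTop atTop :=
      tendsto_atTop_add_const_left _ x tendsto_natCast_atTop_atTop
    have h2 : Tendsto (fun m : ℕ => (x + (m:ℝ))^k) atTop atTop :=
      (tendsto_pow_atTop (n := k) (by omega)).comp h1
    have h3 : Tendsto (fun m : ℕ => ((x + (m:ℝ))^k)⁻¹) atTop (𝓝 0) :=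
      h2.inv_tendsto_atTop
    have h4 := h3.const_mul (1/(k:ℝ))
    simp only [mul_zero] at h4
    exact h4.congr fun n => rfl
  have hTend : Tendsto (fun n => ∑ i ∈ range n, (G i - G (i+1))) atTop (𝓝 (G 0)) := by
    simp only [hsum]
    simpa using tendsto_const_nhds.sub hGlim
  have hhs : HasSum (fun m : ℕ => G m - G (m+1)) (G 0) := by
    rw [hSummable.hasSum_iff_tendsto_nat]
    exact hTend
  rw [← hG0]
  refine hhs.congr_fun fun m => ?_
  simp only [hG]
  push_cast
  ring

include hx hk in
lemma Sp_lt_upper :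
    Sp (k+1) x < (1/(k:ℝ)) * (x^k)⁻¹ + (x^(k+1))⁻¹ := by
  have hf : Summable (fun m : ℕ => ((x + (m:ℝ))^(k+1))⁻¹) := summable_inv_pow hx (by omega)
  have htele := tele_hasSum hx hk
  have hlt : ∀ m : ℕ, ((x + ((m+1:ℕ):ℝ))^(k+1))⁻¹
      < (1/(k:ℝ)) * (((x+m)^k)⁻¹ - ((x+(m+1:ℕ))^k)⁻¹) := by
    intro m
    have h1 : (0:ℝ) < x + m := add_nat_pos hx m
    have h2 := A2 h1 hk
    rw [cast_succ_add]
    exact h2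
  have hsum1 : Summable (fun m : ℕ => ((x + ((m+1:ℕ):ℝ))^(k+1))⁻¹) :=
    (summable_nat_add_iff 1).mpr hf
  have hlt' : ∑' m : ℕ, ((x + ((m+1:ℕ):ℝ))^(k+1))⁻¹
      < ∑' m : ℕ, (1/(k:ℝ)) * (((x+m)^k)⁻¹ - ((x+(m+1:ℕ))^k)⁻¹) :=
    Summable.tsum_lt_tsum (fun m => (hlt m).le) (hlt 0) hsum1 htele.summable
  rw [htele.tsum_eq] at hlt'
  have hsplit : Sp (k+1) x = (x^(k+1))⁻¹ + ∑' m : ℕ, ((x + ((m+1:ℕ):ℝ))^(k+1))⁻¹ := by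
    rw [Sp, Summable.tsum_eq_zero_add hf]
    congr 2
    norm_num
  rw [hsplit]
  linarith

include hx hk in
lemma Sp_gt_lower :
    (1/(k:ℝ)) * (x^k)⁻¹ + (x^(k+1))⁻¹/2 < Sp (k+1) x := by
  have hf : Summable (fun m : ℕ => ((x + (m:ℝ))^(k+1))⁻¹) := summable_inv_pow hx (by omega)
  have hf1 : Summable (fun m : ℕ => ((x + ((m+1:ℕ):ℝ))^(k+1))⁻¹) :=
    (summable_nat_add_iff 1).mpr hf
  have htele := tele_hasSum hx hk
  have hlt : ∀ m : ℕ, (1/(k:ℝ)) * (((x+m)^k)⁻¹ - ((x+(m+1:ℕ))^k)⁻¹)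
      < (((x+m)^(k+1))⁻¹ + ((x + ((m+1:ℕ):ℝ))^(k+1))⁻¹)/2 := by
    intro m
    have h1 : (0:ℝ) < x + m := add_nat_pos hx m
    have h2 := A3 h1 hk
    rw [cast_succ_add]
    exact h2
  have hg : Summable (fun m : ℕ => (((x+m)^(k+1))⁻¹ + ((x + ((m+1:ℕ):ℝ))^(k+1))⁻¹)/2) := by
    exact (hf.add hf1).div_const 2
  have hlt' := Summable.tsum_lt_tsum (fun m => (hlt m).le) (hlt 0) htele.summable hg
  rw [htele.tsum_eq] at hlt'
  have hrhs : ∑' m : ℕ, ((((x+m)^(k+1))⁻¹ + ((x + ((m+1:ℕ):ℝ))^(k+1))⁻¹)/2)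
      = Sp (k+1) x - (x^(k+1))⁻¹/2 := by
    have e1 : ∑' m : ℕ, ((((x+m)^(k+1))⁻¹ + ((x + ((m+1:ℕ):ℝ))^(k+1))⁻¹)/2)
        = (∑' m : ℕ, (((x+m)^(k+1))⁻¹ + ((x + ((m+1:ℕ):ℝ))^(k+1))⁻¹))/2 := by
      rw [tsum_div_const]
    rw [e1, Summable.tsum_add hf hf1]
    have e2 : ∑' m : ℕ, ((x + ((m+1:ℕ):ℝ))^(k+1))⁻¹ = Sp (k+1) x - (x^(k+1))⁻¹ := by
      have h5 := Summable.tsum_eq_zero_add hf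
      rw [show x + ((0:ℕ):ℝ) = x by norm_num] at h5
      rw [Sp, h5]
      ring
    rw [e2, Sp]
    ring
  rw [hrhs] at hlt'
  linarith
end TeleSec

noncomputable def psifun (y : ℝ) : ℝ :=
  -Real.eulerMascheroniConstant + ∑' m : ℕ, ((1+(m:ℝ))⁻¹ - (y+m)⁻¹)

lemma t_norm_bound {a b y : ℝ} (ha : 0 < a) (hy1 : a ≤ y) (hy2 : y ≤ b) (m : ℕ) :
    ‖(1+(m:ℝ))⁻¹ - (y+m)⁻¹‖ ≤ (b+1) * ((1+(m:ℝ))*(a+m))⁻¹ := by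
  have hm0 : (0:ℝ) < 1 + m := by positivity
  have hy : 0 < y := lt_of_lt_of_le ha hy1
  have hym : (0:ℝ) < y + m := add_nat_pos hy m
  have ham : (0:ℝ) < a + m := add_nat_pos ha m
  have he : (1+(m:ℝ))⁻¹ - (y+m)⁻¹ = (y-1) / ((1+(m:ℝ))*(y+m)) := by
    rw [eq_div_iff (by positivity)]
    field_simp
    ring
  have h1 : |y - 1| ≤ b + 1 := by
    rw [abs_le]; constructor <;> nlinarith
  rw [he, Real.norm_eq_abs, abs_div, abs_of_pos (by positivity : (0:ℝ) < (1+(m:ℝ))*(y+m))]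
  calc |y-1| / ((1+(m:ℝ))*(y+m)) ≤ (b+1) / ((1+(m:ℝ))*(a+m)) := by
        apply div_le_div₀ (by linarith) h1 (by positivity)
        have : a + (m:ℝ) ≤ y + m := by linarith
        nlinarith
    _ = (b+1) * ((1+(m:ℝ))*(a+m))⁻¹ := by rw [div_eq_mul_inv]

lemma summable_t {y : ℝ} (hy : 0 < y) :
    Summable fun m : ℕ => ((1+(m:ℝ))⁻¹ - (y+m)⁻¹) := by
  apply Summable.of_norm_bounded ((summable_inv_mul hy).mul_left (y+1))
  intro m
  exact t_norm_bound hy le_rfl le_rfl m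

noncomputable def cseq (n : ℕ) : ℝ := Real.log n - ∑ m ∈ range (n+1), (1+(m:ℝ))⁻¹

lemma harmonic_cast (n : ℕ) : ∑ m ∈ range n, (1+(m:ℝ))⁻¹ = ((harmonic n : ℚ):ℝ) := by
  simp only [harmonic]
  push_cast
  exact Finset.sum_congr rfl fun i _ => by rw [add_comm]

lemma cseq_tendsto : Tendsto cseq atTop (𝓝 (-Real.eulerMascheroniConstant)) := by
  have hA : Tendsto (fun n : ℕ => ((harmonic (n+1) : ℚ):ℝ) - Real.log ((n+1:ℕ):ℝ)) atTop
      (𝓝 Real.eulerMascheroniConstant) :=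
    Real.tendsto_harmonic_sub_log.comp (tendsto_add_atTop_nat 1)
  have hB : Tendsto (fun n : ℕ => Real.log ((n+1:ℕ):ℝ) - Real.log (n:ℝ)) atTop (𝓝 0) := by
    have h1 : Tendsto (fun n : ℕ => 1 + (n:ℝ)⁻¹) atTop (𝓝 1) := by
      have h0 : Tendsto (fun _ : ℕ => (1:ℝ)) atTop (𝓝 1) := tendsto_const_nhds
      simpa using h0.add tendsto_inv_atTop_nhds_zero_nat
    have h2 : Tendsto (fun n : ℕ => Real.log (1 + (n:ℝ)⁻¹)) atTop (𝓝 0) := by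
      have hlog : Tendsto Real.log (𝓝 1) (𝓝 0) := by
        have := (Real.continuousAt_log (one_ne_zero)).tendsto
        simpa using this
      exact hlog.comp h1
    apply h2.congr'
    filter_upwards [eventually_ge_atTop 1] with n hn
    have hn0 : (0:ℝ) < n := by exact_mod_cast hn
    rw [show (1:ℝ) + (n:ℝ)⁻¹ = ((n+1:ℕ):ℝ)/(n:ℝ) by push_cast; field_simp,
      Real.log_div (by positivity) hn0.ne']
  have hcomb := (hA.neg).sub hB
  rw [sub_zero] at hcomb
  apply hcomb.congr
  intro n
  simp only [cseq]
  rw [harmonic_cast (n+1)]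
  push_cast
  ring

lemma tlu_digamma : TendstoLocallyUniformlyOn
    (fun (n:ℕ) (z:ℝ) => Real.log n - ∑ m ∈ range (n+1), (z+m)⁻¹)
    psifun atTop (Ioi 0) := by
  rw [tendstoLocallyUniformlyOn_iff_forall_isCompact isOpen_Ioi]
  intro K hK hKc
  rcases K.eq_empty_or_nonempty with rfl | hne
  · intro u _
    filter_upwards with n z hz
    exact absurd hz (Set.notMem_empty z)
  obtain ⟨a, haK, hamin⟩ := hKc.exists_isMinOn hne continuousOn_id
  obtain ⟨b, hbK, hbmax⟩ := hKc.exists_isMaxOn hne continuousOn_id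
  have ha : 0 < a := hK haK
  have haz : ∀ z ∈ K, a ≤ z := fun z hz => hamin hz
  have hbz : ∀ z ∈ K, z ≤ b := fun z hz => hbmax hz
  -- constant part
  have hcu : TendstoUniformlyOn (fun n (_:ℝ) => cseq n)
      (fun _ => -Real.eulerMascheroniConstant) atTop K := by
    rw [Metric.tendstoUniformlyOn_iff]
    intro ε hε
    filter_upwards [Metric.tendsto_nhds.mp cseq_tendsto ε hε] with n hn z _
    rw [dist_comm]
    exact hn
  -- series part
  have hu : Summable (fun m:ℕ => (b+1) * ((1+(m:ℝ))*(a+m))⁻¹) :=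
    (summable_inv_mul ha).mul_left _
  have hT := tendstoUniformlyOn_tsum_nat (f := fun (m : ℕ) (z : ℝ) => (1+(m:ℝ))⁻¹ - (z+m)⁻¹) hu
    (s := K) (fun m z hz => t_norm_bound ha (haz z hz) (hbz z hz) m)
  have hT1 : TendstoUniformlyOn
      (fun (n : ℕ) (z : ℝ) => ∑ m ∈ range (n+1), ((1+(m:ℝ))⁻¹ - (z+m)⁻¹))
      (fun z : ℝ => ∑' m : ℕ, ((1+(m:ℝ))⁻¹ - (z+m)⁻¹)) atTop K :=
    fun u hu' => (tendsto_add_atTop_nat 1).eventually (hT u hu')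
  have hcomb := hcu.add hT1
  apply hcomb.congr
  filter_upwards with n z hz
  simp only [Pi.add_apply, cseq]
  rw [Finset.sum_sub_distrib]
  ring

lemma digamma_eq_psi {y : ℝ} (hy : 0 < y) : digamma y = psifun y := by
  have hder : HasDerivAt (fun z => Real.log (Real.Gamma z)) (psifun y) y := by
    apply hasDerivAt_of_tendstoLocallyUniformlyOn
      (f := fun (n:ℕ) (z:ℝ) => Real.BohrMollerup.logGammaSeq z n)
      isOpen_Ioi tlu_digamma ?_ ?_ (Set.mem_Ioi.2 hy)
    · filter_upwards with n
      intro z hz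
      have hz0 : 0 < z := hz
      have h1 : HasDerivAt (fun w:ℝ => w * Real.log n + Real.log (Nat.factorial n))
          (Real.log n) z := by
        simpa using ((hasDerivAt_id z).mul_const (Real.log n)).add_const
          (Real.log (Nat.factorial n))
      have h2 : HasDerivAt (fun w:ℝ => ∑ m ∈ range (n+1), Real.log (w+m))
          (∑ m ∈ range (n+1), (z+m)⁻¹) z := by
        apply HasDerivAt.fun_sum
        intro m _
        have hzm : (0:ℝ) < z + m := add_nat_pos hz0 m
        simpa [one_div] using ((hasDerivAt_id z).add_const (m:ℝ)).log hzm.ne'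
      have h3 := h1.sub h2
      simp only [Real.BohrMollerup.logGammaSeq]
      exact h3
    · intro z hz
      exact Real.BohrMollerup.tendsto_log_gamma hz
  have hdiff : DifferentiableAt ℝ Real.Gamma y :=
    Real.differentiableAt_Gamma fun m =>
      ne_of_gt (by have := Nat.cast_nonneg (α := ℝ) m; linarith)
  have hlog := deriv.log hdiff (Real.Gamma_pos_of_pos hy).ne'
  rw [digamma, ← hlog, hder.deriv]

lemma hasDerivAt_psifun {x : ℝ} (hx : 0 < x) : HasDerivAt psifun (Sp 2 x) x := by
  have hx2 : 0 < x/2 := by linarith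
  have hmem : x ∈ Ioi (x/2) := by rw [Set.mem_Ioi]; linarith
  have hf' : TendstoLocallyUniformlyOn
      (fun (n:ℕ) (z:ℝ) => ∑ m ∈ range n, ((z+m)^2)⁻¹)
      (fun z : ℝ => ∑' m : ℕ, ((z+m)^2)⁻¹) atTop (Ioi (x/2)) := by
    apply TendstoUniformlyOn.tendstoLocallyUniformlyOn
    apply tendstoUniformlyOn_tsum_nat (u := fun m : ℕ => ((x/2+m)^2)⁻¹)
      (summable_inv_pow hx2 le_rfl)
    intro m z hz
    rw [Set.mem_Ioi] at hz
    have hzm : (0:ℝ) < z + m := by have := Nat.cast_nonneg (α := ℝ) m; linarith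
    rw [Real.norm_eq_abs, abs_of_pos (by positivity)]
    apply inv_anti₀ (by positivity)
    apply pow_le_pow_left₀ (by positivity)
    linarith
  have := hasDerivAt_of_tendstoLocallyUniformlyOn
    (f := fun (n:ℕ) (z:ℝ) => -Real.eulerMascheroniConstant
      + ∑ m ∈ range n, ((1+(m:ℝ))⁻¹ - (z+m)⁻¹))
    (g := psifun) isOpen_Ioi hf' ?_ ?_ hmem
  · exact this
  · filter_upwards with n
    intro z hz
    rw [Set.mem_Ioi] at hz
    apply HasDerivAt.const_add
    apply HasDerivAt.fun_sum
    intro m _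
    have hzm : (0:ℝ) < z + m := by have := Nat.cast_nonneg (α := ℝ) m; linarith
    have h1 := ((hasDerivAt_id z).add_const (m:ℝ)).inv hzm.ne'
    have h2 := h1.const_sub ((1+(m:ℝ))⁻¹)
    simpa [id_eq, neg_div, one_div] using h2
  · intro z hz
    rw [Set.mem_Ioi] at hz
    have hz0 : 0 < z := by linarith
    exact ((summable_t hz0).hasSum.tendsto_sum_nat).const_add _

lemma hasDerivAt_Sp {p : ℕ} (hp : 2 ≤ p) {x : ℝ} (hx : 0 < x) :
    HasDerivAt (Sp p) (-(p:ℝ) * Sp (p+1) x) x := by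
  have hx2 : 0 < x/2 := by linarith
  have hmem : x ∈ Ioi (x/2) := by rw [Set.mem_Ioi]; linarith
  have hlimeq : (fun z : ℝ => ∑' m : ℕ, (-(p:ℝ) * ((z+m)^(p+1))⁻¹))
      = fun z : ℝ => -(p:ℝ) * Sp (p+1) z := by
    funext z
    rw [tsum_mul_left]
    rfl
  have hf' : TendstoLocallyUniformlyOn
      (fun (n:ℕ) (z:ℝ) => ∑ m ∈ range n, (-(p:ℝ) * ((z+m)^(p+1))⁻¹))
      (fun z : ℝ => -(p:ℝ) * Sp (p+1) z) atTop (Ioi (x/2)) := by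
    rw [← hlimeq]
    apply TendstoUniformlyOn.tendstoLocallyUniformlyOn
    apply tendstoUniformlyOn_tsum_nat (u := fun m : ℕ => (p:ℝ) * ((x/2+m)^(p+1))⁻¹)
      ((summable_inv_pow hx2 (by omega)).mul_left _)
    intro m z hz
    rw [Set.mem_Ioi] at hz
    have hzm : (0:ℝ) < z + m := by have := Nat.cast_nonneg (α := ℝ) m; linarith
    rw [Real.norm_eq_abs, abs_mul, abs_neg, abs_of_nonneg (Nat.cast_nonneg p),
      abs_of_pos (by positivity)]
    apply mul_le_mul_of_nonneg_left _ (Nat.cast_nonneg p)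
    apply inv_anti₀ (by positivity)
    apply pow_le_pow_left₀ (by positivity)
    linarith
  have := hasDerivAt_of_tendstoLocallyUniformlyOn
    (f := fun (n:ℕ) (z:ℝ) => ∑ m ∈ range n, ((z+m)^p)⁻¹)
    (g := Sp p) isOpen_Ioi hf' ?_ ?_ hmem
  · exact this
  · filter_upwards with n
    intro z hz
    rw [Set.mem_Ioi] at hz
    apply HasDerivAt.fun_sum
    intro m _
    have hzm : (0:ℝ) < z + m := by have := Nat.cast_nonneg (α := ℝ) m; linarith
    have h0 : HasDerivAt (fun w:ℝ => (w+m)^p) ((p:ℝ)*(z+m)^(p-1)) z := by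
      exact (((hasDerivAt_id z).add_const (m:ℝ)).pow p).congr_deriv (by simp)
    have h1 : HasDerivAt (fun w:ℝ => ((w+(m:ℝ))^p)⁻¹) (-((p:ℝ)*(z+m)^(p-1)) / ((z+m)^p)^2) z :=
      h0.inv (pow_ne_zero p hzm.ne')
    refine h1.congr_deriv ?_
    have e : ((z+(m:ℝ))^p)^2 = (z+m)^(p-1) * (z+m)^(p+1) := by
      rw [← pow_mul, ← pow_add]; congr 1; omega
    rw [e]
    have hne1 : ((z+(m:ℝ))^(p-1)) ≠ 0 := pow_ne_zero _ hzm.ne'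
    have hne2 : ((z+(m:ℝ))^(p+1)) ≠ 0 := pow_ne_zero _ hzm.ne'
    field_simp
  · intro z hz
    rw [Set.mem_Ioi] at hz
    have hz0 : 0 < z := by linarith
    exact (summable_inv_pow hz0 hp).hasSum.tendsto_sum_nat

lemma iteratedDeriv_digamma {k : ℕ} (hk : 1 ≤ k) :
    ∀ x : ℝ, 0 < x →
      iteratedDeriv k digamma x = (-1:ℝ)^(k+1) * (Nat.factorial k) * Sp (k+1) x := by
  induction k, hk using Nat.le_induction with
  | base =>
    intro x hx
    rw [iteratedDeriv_one]
    have hev : digamma =ᶠ[𝓝 x] psifun := by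
      filter_upwards [isOpen_Ioi.mem_nhds (Set.mem_Ioi.2 hx)] with z hz
      exact digamma_eq_psi hz
    rw [hev.deriv_eq, (hasDerivAt_psifun hx).deriv]
    norm_num
  | succ n hn ih =>
    intro x hx
    rw [iteratedDeriv_succ]
    have hev : iteratedDeriv n digamma
        =ᶠ[𝓝 x] (fun z => (-1:ℝ)^(n+1) * (Nat.factorial n) * Sp (n+1) z) := by
      filter_upwards [isOpen_Ioi.mem_nhds (Set.mem_Ioi.2 hx)] with z hz
      exact ih z hz
    rw [hev.deriv_eq]
    have hd : HasDerivAt (fun z => (-1:ℝ)^(n+1) * (Nat.factorial n) * Sp (n+1) z)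
        (((-1:ℝ)^(n+1) * (Nat.factorial n)) * (-(((n+1:ℕ)):ℝ) * Sp (n+1+1) x)) x :=
      (hasDerivAt_Sp (by omega) hx).const_mul _
    rw [hd.deriv]
    push_cast [Nat.factorial_succ]
    ring

theorem polygamma_bounds (k : ℕ) (hk : 1 ≤ k) (x : ℝ) (hx : 0 < x) :
    (Nat.factorial (k - 1)) / x ^ k + (Nat.factorial k) / (2 * x ^ (k + 1))
        < (-1 : ℝ) ^ (k + 1) * iteratedDeriv k digamma x ∧
    (-1 : ℝ) ^ (k + 1) * iteratedDeriv k digamma x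
        < (Nat.factorial (k - 1)) / x ^ k + (Nat.factorial k) / x ^ (k + 1) := by
  have hkpos : (0:ℝ) < k := by exact_mod_cast hk
  have hfacpos : (0:ℝ) < (Nat.factorial k : ℝ) := by
    exact_mod_cast Nat.factorial_pos k
  have h1 : (-1:ℝ)^(k+1) * iteratedDeriv k digamma x
      = (Nat.factorial k : ℝ) * Sp (k+1) x := by
    rw [iteratedDeriv_digamma hk x hx, ← mul_assoc, ← mul_assoc, ← pow_add]
    have he : (-1:ℝ)^(k+1+(k+1)) = 1 := by
      rw [show k+1+(k+1) = 2*(k+1) by ring, pow_mul]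
      norm_num
    rw [he, one_mul]
  have hkfac : ((Nat.factorial k : ℕ):ℝ) = (k:ℝ) * ((Nat.factorial (k-1) : ℕ):ℝ) := by
    exact_mod_cast (Nat.mul_factorial_pred (by omega)).symm
  have e1 : (Nat.factorial k : ℝ) * ((1/(k:ℝ)) * (x^k)⁻¹ + (x^(k+1))⁻¹/2)
      = (Nat.factorial (k-1) : ℝ) / x^k + (Nat.factorial k : ℝ) / (2*x^(k+1)) := by
    rw [hkfac]
    field_simp
  have e2 : (Nat.factorial k : ℝ) * ((1/(k:ℝ)) * (x^k)⁻¹ + (x^(k+1))⁻¹)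
      = (Nat.factorial (k-1) : ℝ) / x^k + (Nat.factorial k : ℝ) / x^(k+1) := by
    rw [hkfac]
    field_simp
  constructor
  · rw [h1, ← e1]
    exact mul_lt_mul_of_pos_left (Sp_gt_lower hx hk) hfacpos
  · rw [h1, ← e2]
    exact mul_lt_mul_of_pos_left (Sp_lt_upper hx hk) hfacpos
end

section
/- For all t > 0, the hyperbolic Wilker inequality holds: (t/sinh t)² + t/tanh t > 2. -/
open Real

lemma pos_of_deriv_pos (g : ℝ → ℝ) (hc : Continuous g) (h0 : g 0 = 0)
    (hd : ∀ x : ℝ, 0 < x → 0 < deriv g x) {t : ℝ} (ht : 0 < t) : 0 < g t := by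
  have hmono : StrictMonoOn g (Set.Ici (0:ℝ)) := by
    apply strictMonoOn_of_deriv_pos (convex_Ici 0) hc.continuousOn
    intro x hx
    rw [interior_Ici] at hx
    exact hd x hx
  have := hmono (Set.self_mem_Ici) (le_of_lt ht) ht
  simpa [h0] using this

lemma lem1 {x : ℝ} (hx : 0 < x) : 0 < x * Real.cosh x - Real.sinh x := by
  have hD : ∀ y : ℝ, HasDerivAt (fun x => x * Real.cosh x - Real.sinh x)
      (y * Real.sinh y) y := by
    intro y
    have h1 : HasDerivAt (fun x : ℝ => x * Real.cosh x)
        (1 * Real.cosh y + y * Real.sinh y) y :=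
      (hasDerivAt_id y).mul (Real.hasDerivAt_cosh y)
    have := h1.sub (Real.hasDerivAt_sinh y)
    refine this.congr_deriv ?_
    ring
  refine pos_of_deriv_pos (fun x => x * Real.cosh x - Real.sinh x) (by continuity) (by simp) (fun y hy => ?_) hx
  rw [(hD y).deriv]
  exact mul_pos hy (Real.sinh_pos_iff.2 hy)

lemma lem2 {x : ℝ} (hx : 0 < x) :
    0 < 1 - Real.cosh (2*x) + x * Real.sinh (2*x) := by
  have hD : ∀ y : ℝ, HasDerivAt (fun x => 1 - Real.cosh (2*x) + x * Real.sinh (2*x))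
      ((2*y) * Real.cosh (2*y) - Real.sinh (2*y)) y := by
    intro y
    have hc : HasDerivAt (fun x : ℝ => Real.cosh (2*x)) (Real.sinh (2*y) * 2) y :=
      (Real.hasDerivAt_cosh (2*y)).comp y (by simpa using (hasDerivAt_id y).const_mul 2)
    have hs : HasDerivAt (fun x : ℝ => Real.sinh (2*x)) (Real.cosh (2*y) * 2) y :=
      (Real.hasDerivAt_sinh (2*y)).comp y (by simpa using (hasDerivAt_id y).const_mul 2)
    have h1 : HasDerivAt (fun x : ℝ => x * Real.sinh (2*x))
        (1 * Real.sinh (2*y) + y * (Real.cosh (2*y) * 2)) y :=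
      (hasDerivAt_id y).mul hs
    have := ((hasDerivAt_const y (1:ℝ)).sub hc).add h1
    refine this.congr_deriv ?_
    ring
  refine pos_of_deriv_pos (fun x => 1 - Real.cosh (2*x) + x * Real.sinh (2*x)) (by continuity) (by simp) (fun y hy => ?_) hx
  rw [(hD y).deriv]
  have := lem1 (x := 2*y) (by linarith)
  linarith

lemma lem3 {x : ℝ} (hx : 0 < x) :
    0 < 2*x - 3 * Real.sinh x * Real.cosh x + x * (Real.cosh x ^ 2 + Real.sinh x ^ 2) := by
  have hD : ∀ y : ℝ, HasDerivAt
      (fun x => 2*x - 3 * Real.sinh x * Real.cosh x + x * (Real.cosh x ^ 2 + Real.sinh x ^ 2))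
      (2 - 2 * (Real.cosh y ^ 2 + Real.sinh y ^ 2) + 4 * y * Real.sinh y * Real.cosh y) y := by
    intro y
    have h1 : HasDerivAt (fun x : ℝ => 2*x) 2 y := by
      simpa using (hasDerivAt_id y).const_mul 2
    have h2 : HasDerivAt (fun x : ℝ => 3 * Real.sinh x * Real.cosh x)
        ((3 * Real.cosh y) * Real.cosh y + (3 * Real.sinh y) * Real.sinh y) y :=
      (((Real.hasDerivAt_sinh y).const_mul 3).mul (Real.hasDerivAt_cosh y))
    have h3 : HasDerivAt (fun x : ℝ => Real.cosh x ^ 2 + Real.sinh x ^ 2)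
        (2 * Real.cosh y ^ 1 * Real.sinh y + 2 * Real.sinh y ^ 1 * Real.cosh y) y :=
      ((Real.hasDerivAt_cosh y).pow 2).add ((Real.hasDerivAt_sinh y).pow 2)
    have h4 : HasDerivAt (fun x : ℝ => x * (Real.cosh x ^ 2 + Real.sinh x ^ 2))
        (1 * (Real.cosh y ^ 2 + Real.sinh y ^ 2) +
          y * (2 * Real.cosh y ^ 1 * Real.sinh y + 2 * Real.sinh y ^ 1 * Real.cosh y)) y :=
      (hasDerivAt_id y).mul h3
    have := (h1.sub h2).add h4
    refine this.congr_deriv ?_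
    ring
  refine pos_of_deriv_pos (fun x => 2*x - 3 * Real.sinh x * Real.cosh x + x * (Real.cosh x ^ 2 + Real.sinh x ^ 2)) (by continuity) (by simp) (fun y hy => ?_) hx
  rw [(hD y).deriv]
  have h2 := lem2 hy
  have hc2 : Real.cosh (2*y) = Real.cosh y ^ 2 + Real.sinh y ^ 2 := Real.cosh_two_mul y
  have hs2 : Real.sinh (2*y) = 2 * Real.sinh y * Real.cosh y := Real.sinh_two_mul y
  have hsq : Real.cosh y ^ 2 - Real.sinh y ^ 2 = 1 := Real.cosh_sq_sub_sinh_sq y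
  nlinarith [h2, hc2, hs2, hsq]

lemma keylem {t : ℝ} (ht : 0 < t) :
    0 < t^2 + t * Real.sinh t * Real.cosh t - 2 * Real.sinh t ^ 2 := by
  have hD : ∀ y : ℝ, HasDerivAt
      (fun t => t^2 + t * Real.sinh t * Real.cosh t - 2 * Real.sinh t ^ 2)
      (2*y - 3 * Real.sinh y * Real.cosh y + y * (Real.cosh y ^ 2 + Real.sinh y ^ 2)) y := by
    intro y
    have h1 : HasDerivAt (fun t : ℝ => t^2) (2 * y ^ 1 * 1) y := (hasDerivAt_id y).pow 2
    have h2 : HasDerivAt (fun t : ℝ => t * Real.sinh t)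
        (1 * Real.sinh y + y * Real.cosh y) y := (hasDerivAt_id y).mul (Real.hasDerivAt_sinh y)
    have h3 : HasDerivAt (fun t : ℝ => t * Real.sinh t * Real.cosh t)
        ((1 * Real.sinh y + y * Real.cosh y) * Real.cosh y + (y * Real.sinh y) * Real.sinh y) y :=
      h2.mul (Real.hasDerivAt_cosh y)
    have h4 : HasDerivAt (fun t : ℝ => 2 * Real.sinh t ^ 2)
        (2 * (2 * Real.sinh y ^ 1 * Real.cosh y)) y :=
      ((Real.hasDerivAt_sinh y).pow 2).const_mul 2
    have := (h1.add h3).sub h4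
    refine this.congr_deriv ?_
    ring
  refine pos_of_deriv_pos (fun t => t^2 + t * Real.sinh t * Real.cosh t - 2 * Real.sinh t ^ 2) (by continuity) (by simp) (fun y hy => ?_) ht
  rw [(hD y).deriv]
  exact lem3 hy

theorem wilker_hyperbolic (t : ℝ) (ht : 0 < t) :
    2 < (t / Real.sinh t) ^ 2 + t / Real.tanh t := by
  have hs : 0 < Real.sinh t := Real.sinh_pos_iff.2 ht
  have hc : 0 < Real.cosh t := Real.cosh_pos t
  have hk := keylem ht
  rw [Real.tanh_eq_sinh_div_cosh]
  rw [div_pow, div_div_eq_mul_div, div_add_div _ _ (by positivity) (by positivity),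
    lt_div_iff₀ (by positivity)]
  nlinarith [hk, sq_nonneg (Real.sinh t), mul_pos hs hc]
end
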